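/- arXiv:2410.16178 — 5 statements merged into one kernel-verified Lean document; each statement's English description precedes it below -/
import Mathlib

section
/- Let γ : [0,1] → ℂ \ {z₀} be a continuous closed curve, and let R_{z₀,θ} = {z₀ + r·e^{iθ} : r ≥ 0} be a ray from z₀ with angle θ. Assume γ(0) ∉ R_{z₀,θ}. Then the set A = {t ∈ [0,1] : γ(t) ∈ R_{z₀,θ}} has at least |Ind_γ(z₀)| connected components, where Ind_γ(z₀) is the winding number of γ around z₀. -/
open Complex Set

theorem int_cast_ne_int_cast_add_half (m m' : ℤ) : (m : ℝ) ≠ (m' : ℝ) + 1/2 := by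
  intro h
  have h2 : ((2*m : ℤ) : ℝ) = ((2*m' + 1 : ℤ) : ℝ) := by push_cast; linarith
  have := Int.cast_injective h2
  omega

/-- A closed continuous curve avoiding `z₀`, with winding number `k`
(defined via a continuous polar lift), meets any ray from `z₀` not containing `γ 0`
in a set with at least `|k|` connected components. -/
theorem stieltjes_ray_bound
    (z₀ : ℂ) (θ₀ : ℝ) (γ : ℝ → ℂ)
    (hγcont : ContinuousOn γ (Icc 0 1))
    (hclosed : γ 1 = γ 0)
    (hne : ∀ t ∈ Icc (0:ℝ) 1, γ t ≠ z₀)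
    -- continuous polar lift of γ around z₀
    (r θ : ℝ → ℝ)
    (hr : ContinuousOn r (Icc 0 1)) (hθ : ContinuousOn θ (Icc 0 1))
    (hrpos : ∀ t ∈ Icc (0:ℝ) 1, 0 < r t)
    (hlift : ∀ t ∈ Icc (0:ℝ) 1, γ t = z₀ + (r t : ℂ) * Complex.exp ((θ t : ℂ) * Complex.I))
    -- winding number k
    (k : ℤ) (hk : θ 1 - θ 0 = 2 * Real.pi * k)
    -- the ray and the assumption γ(0) ∉ ray
    (R : Set ℂ) (hR : R = {z : ℂ | ∃ ρ : ℝ, 0 ≤ ρ ∧ z = z₀ + (ρ : ℂ) * Complex.exp ((θ₀ : ℂ) * Complex.I)})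
    (h0 : γ 0 ∉ R)
    (A : Set ℝ) (hA : A = {t ∈ Icc (0:ℝ) 1 | γ t ∈ R}) :
    -- A has at least |k| connected components: there are |k| points of A
    -- lying in pairwise distinct connected components of A
    ∃ p : Fin k.natAbs → ℝ, (∀ i, p i ∈ A) ∧
      ∀ i j, i ≠ j → connectedComponentIn A (p i) ≠ connectedComponentIn A (p j) := by
  have hπ : (0:ℝ) < 2 * Real.pi := by positivity
  set f : ℝ → ℝ := fun t => (θ t - θ₀) / (2 * Real.pi) with hf
  have hfcont : ContinuousOn f (Icc 0 1) := (hθ.sub continuousOn_const).div_const _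
  -- membership criterion
  have hmem : ∀ t ∈ Icc (0:ℝ) 1, (γ t ∈ R ↔ ∃ m : ℤ, f t = m) := by
    intro t ht
    constructor
    · rintro hγR
      rw [hR] at hγR
      obtain ⟨ρ, hρ, heq⟩ := hγR
      rw [hlift t ht] at heq
      have key : (r t : ℂ) * Complex.exp ((θ t : ℂ) * Complex.I)
          = (ρ : ℂ) * Complex.exp ((θ₀ : ℂ) * Complex.I) := by
        linear_combination heq
      have habs : r t = ρ := by
        have := congrArg norm key
        simpa [Complex.norm_exp_ofReal_mul_I, Complex.norm_real, Real.norm_eq_abs, abs_of_pos (hrpos t ht), _root_.abs_of_nonneg hρ]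
          using this
      have hrne : (r t : ℂ) ≠ 0 := by
        exact_mod_cast ne_of_gt (hrpos t ht)
      rw [← habs] at key
      have hexp : Complex.exp ((θ t : ℂ) * Complex.I) = Complex.exp ((θ₀ : ℂ) * Complex.I) :=
        mul_left_cancel₀ hrne key
      rw [Complex.exp_eq_exp_iff_exists_int] at hexp
      obtain ⟨n, hn⟩ := hexp
      refine ⟨n, ?_⟩
      have hI : ((θ t : ℂ)) * Complex.I = ((θ₀ + n * (2 * Real.pi) : ℝ) : ℂ) * Complex.I := by
        push_cast
        linear_combination hn
      have := mul_right_cancel₀ Complex.I_ne_zero hI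
      have hreal : θ t = θ₀ + n * (2 * Real.pi) := by exact_mod_cast this
      rw [hf]
      field_simp
      linarith
    · rintro ⟨m, hm⟩
      have hreal : θ t = θ₀ + m * (2 * Real.pi) := by
        have : (θ t - θ₀) / (2 * Real.pi) = m := hm
        field_simp at this
        linarith
      rw [hR]
      refine ⟨r t, le_of_lt (hrpos t ht), ?_⟩
      rw [hlift t ht, hreal]
      have : Complex.exp (((θ₀ + m * (2 * Real.pi) : ℝ) : ℂ) * Complex.I)
          = Complex.exp ((θ₀ : ℂ) * Complex.I) := by
        push_cast
        rw [add_mul, Complex.exp_add]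
        have h1 : Complex.exp ((m : ℂ) * (2 * Real.pi) * Complex.I) = 1 := by
          simpa [mul_assoc, mul_comm, mul_left_comm] using Complex.exp_int_mul_two_pi_mul_I m
        rw [h1, mul_one]
      rw [this]
  -- f on A is integer valued; f 0 is not an integer
  have hf0 : ∀ m : ℤ, f 0 ≠ m := by
    intro m hm
    exact h0 (((hmem 0 (by norm_num)).2 ⟨m, hm⟩))
  have hf1 : f 1 = f 0 + k := by
    rw [hf]
    field_simp
    linarith
  have hf1' : ∀ m : ℤ, f 1 ≠ m := by
    intro m hm
    exact hf0 (m - k) (by rw [hf1] at hm; push_cast; linarith)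
  set a : ℝ := min (f 0) (f 1) with ha
  set b : ℝ := max (f 0) (f 1) with hb
  have hcast : ((k.natAbs : ℝ)) = |(k:ℝ)| := by rw [Nat.cast_natAbs, Int.cast_abs]
  have hba : b - a = (k.natAbs : ℝ) := by
    rw [hcast]
    rcases le_total (f 0) (f 1) with h | h
    · have h1 : b - a = f 1 - f 0 := by rw [ha, hb, min_eq_left h, max_eq_right h]
      have h2 : (0:ℝ) ≤ (k:ℝ) := by rw [hf1] at h; linarith
      rw [h1, hf1, _root_.abs_of_nonneg h2]; ring
    · have h1 : b - a = f 0 - f 1 := by rw [ha, hb, min_eq_right h, max_eq_left h]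
      have h2 : (k:ℝ) ≤ 0 := by rw [hf1] at h; linarith
      rw [h1, hf1, abs_of_nonpos h2]; ring
  have hane : ∀ m : ℤ, a ≠ m := by
    intro m
    rcases le_total (f 0) (f 1) with h | h
    · rw [ha, min_eq_left h]; exact hf0 m
    · rw [ha, min_eq_right h]; exact hf1' m
  set n : ℤ := ⌈a⌉ with hn
  have han : a < n := lt_of_le_of_ne (Int.le_ceil a) (hane n)
  have han' : (n:ℝ) < a + 1 := by
    have := Int.ceil_lt_add_one a
    exact this
  -- construct the points
  have hexist : ∀ i : Fin k.natAbs, ∃ t ∈ Icc (0:ℝ) 1, f t = n + i := by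
    intro i
    have hy : (n:ℝ) + i ∈ uIcc (f 0) (f 1) := by
      rw [uIcc, ← ha, ← hb]
      constructor
      · have : (0:ℝ) ≤ (i:ℝ) := by positivity
        linarith
      · have hi : (i:ℝ) ≤ (k.natAbs : ℝ) - 1 := by
          have := i.2
          have : (i:ℝ) + 1 ≤ (k.natAbs : ℝ) := by exact_mod_cast this
          linarith
        linarith
    have hsub : uIcc (f 0) (f 1) ⊆ f '' uIcc 0 1 := by
      apply intermediate_value_uIcc
      rwa [uIcc_of_le (by norm_num : (0:ℝ) ≤ 1)]
    obtain ⟨t, ht, hft⟩ := hsub hy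
    rw [uIcc_of_le (by norm_num : (0:ℝ) ≤ 1)] at ht
    exact ⟨t, ht, hft⟩
  choose p hp hfp using hexist
  have hpA : ∀ i, p i ∈ A := by
    intro i
    rw [hA]
    refine ⟨hp i, (hmem (p i) (hp i)).2 ⟨n + i, by push_cast [hfp i]; ring⟩⟩
  refine ⟨p, hpA, ?_⟩
  intro i j hij hcomp
  -- p j lies in the connected component of p i within A
  have hji : p j ∈ connectedComponentIn A (p i) := by
    rw [hcomp]
    exact mem_connectedComponentIn (hpA j)
  have hCsub : connectedComponentIn A (p i) ⊆ A := connectedComponentIn_subset A (p i)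
  have hCconn : IsPreconnected (connectedComponentIn A (p i)) :=
    isPreconnected_connectedComponentIn
  have hord : OrdConnected (connectedComponentIn A (p i)) := hCconn.ordConnected
  have hIcc : uIcc (p i) (p j) ⊆ A := by
    intro x hx
    apply hCsub
    exact hord.uIcc_subset (mem_connectedComponentIn (hpA i)) hji hx
  have hIcc01 : uIcc (p i) (p j) ⊆ Icc 0 1 := by
    intro x hx
    rw [hA] at hIcc
    exact (hIcc hx).1
  -- f takes a half-integer value on uIcc (p i) (p j) ⊆ A, contradiction
  obtain ⟨mi, mj, hfpi, hfpj, hmij⟩ :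
      ∃ mi mj : ℤ, f (p i) = mi ∧ f (p j) = mj ∧ mi ≠ mj := by
    refine ⟨n + (i:ℕ), n + (j:ℕ), ?_, ?_, ?_⟩
    · rw [hfp i]; push_cast; ring
    · rw [hfp j]; push_cast; ring
    · intro h; apply hij; apply Fin.ext; omega
  have hcm : ((min mi mj : ℤ) : ℝ) + 1/2 ∈ uIcc (f (p i)) (f (p j)) := by
    rw [hfpi, hfpj, Set.mem_uIcc]
    rcases le_total mi mj with h | h
    · left
      have h1 : mi + 1 ≤ mj := by omega
      have h1' : (mi:ℝ) + 1 ≤ (mj:ℝ) := by exact_mod_cast h1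
      have h2 : ((min mi mj : ℤ):ℝ) = (mi:ℝ) := by rw [min_eq_left h]
      rw [h2]; constructor <;> linarith
    · right
      have h1 : mj + 1 ≤ mi := by omega
      have h1' : (mj:ℝ) + 1 ≤ (mi:ℝ) := by exact_mod_cast h1
      have h2 : ((min mi mj : ℤ):ℝ) = (mj:ℝ) := by rw [min_eq_right h]
      rw [h2]; constructor <;> linarith
  obtain ⟨t, ht, hft⟩ := intermediate_value_uIcc (hfcont.mono hIcc01) hcm
  have htA : t ∈ A := hIcc ht
  rw [hA] at htA
  obtain ⟨m, hm⟩ := (hmem t htA.1).1 htA.2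
  rw [hft] at hm
  exact int_cast_ne_int_cast_add_half m (min mi mj) hm.symm
end

section
/- Let f : U → ℂ be a non-constant holomorphic function on an open connected set U, let D ⊆ ℂ be dense, and suppose that for every ζ ∈ D the equation f(z) = ζ has at most N solutions in U counted with multiplicity. Then for every ζ ∈ ℂ, the equation f(z) = ζ has at most N solutions in U counted with multiplicity. -/
open Set

open scoped Classical in
/-- The multiplicity of `z` as a solution of `f z = ζ`: the order of vanishing of
`f - ζ` at `z` (as an extended natural number), `0` if `f - ζ` is not analytic there. -/
noncomputable def solutionMultiplicity (f : ℂ → ℂ) (ζ z : ℂ) : ℕ∞ :=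
  if h : AnalyticAt ℂ (fun w => f w - ζ) z then analyticOrderAt (fun w => f w - ζ) z else 0


lemma solutionMultiplicity_eq {f : ℂ → ℂ} {ζ z : ℂ}
    (h : AnalyticAt ℂ (fun w => f w - ζ) z) : solutionMultiplicity f ζ z = analyticOrderAt (fun w => f w - ζ) z := by
  rw [solutionMultiplicity, dif_pos h]

lemma one_le_solutionMultiplicity {f : ℂ → ℂ} {ζ z : ℂ}
    (h : AnalyticAt ℂ (fun w => f w - ζ) z) (hz : f z = ζ) :
    1 ≤ solutionMultiplicity f ζ z := by
  rw [solutionMultiplicity_eq h, ENat.one_le_iff_ne_zero]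
  intro h0
  have h0' : analyticOrderAt (fun w => f w - ζ) z = ((0 : ℕ) : ℕ∞) := by exact_mod_cast h0
  rw [h.analyticOrderAt_eq_natCast] at h0'
  obtain ⟨g, hg, hgz, hev⟩ := h0'
  have := hev.self_of_nhds
  simp only [pow_zero, one_smul, hz, sub_self] at this
  exact hgz this.symm

lemma local_count (U : Set ℂ) (hU : IsOpen U) (f : ℂ → ℂ) (hf : DifferentiableOn ℂ f U)
    (ζ z : ℂ) (hz : z ∈ U) (hfz : f z = ζ)
    (hne : ¬ ∀ᶠ w in nhds z, f w = ζ) :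
    ∃ n : ℕ, 1 ≤ n ∧ solutionMultiplicity f ζ z = n ∧
      ∀ t ∈ nhds z, ∃ ε > 0, ∀ ζ' : ℂ, ζ' ≠ ζ → dist ζ' ζ < ε →
        ∃ T : Finset ℂ, T.card = n ∧ ∀ w ∈ T, w ∈ t ∧ w ∈ U ∧ f w = ζ' := by
  have hA : AnalyticAt ℂ (fun w => f w - ζ) z :=
    (hf.analyticAt (hU.mem_nhds hz)).sub analyticAt_const
  have htop : analyticOrderAt (fun w => f w - ζ) z ≠ ⊤ := by
    rw [Ne, analyticOrderAt_eq_top]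
    intro h
    exact hne (h.mono fun w hw => sub_eq_zero.mp hw)
  obtain ⟨n, hn⟩ : ∃ n : ℕ, analyticOrderAt (fun w => f w - ζ) z = (n : ℕ∞) := by
    cases h : analyticOrderAt (fun w => f w - ζ) z with
    | top => exact absurd h htop
    | coe n => exact ⟨n, rfl⟩
  have hmult : solutionMultiplicity f ζ z = n := by rw [solutionMultiplicity_eq hA, hn]
  rw [hA.analyticOrderAt_eq_natCast] at hn
  obtain ⟨g, hg, hgz, hev⟩ := hn
  have hn1 : 1 ≤ n := by
    rcases Nat.eq_zero_or_pos n with h0 | h1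
    · subst h0
      have := hev.self_of_nhds
      simp only [pow_zero, one_smul, hfz, sub_self] at this
      exact absurd this.symm hgz
    · exact h1
  have hn0 : (n : ℂ) ≠ 0 := Nat.cast_ne_zero.mpr (by omega)
  -- n-th root of g
  set c : ℂ := Complex.exp (Complex.log (g z) / n) with hcdef
  have hc0 : c ≠ 0 := Complex.exp_ne_zero _
  have hc : c ^ n = g z := by
    rw [hcdef, ← Complex.exp_nat_mul, mul_div_cancel₀ _ hn0, Complex.exp_log hgz]
  set h : ℂ → ℂ := fun w => c * Complex.exp (Complex.log (g w / g z) / n) with hhdef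
  have hq : AnalyticAt ℂ (fun w => g w / g z) z := hg.div analyticAt_const hgz
  have hq1 : g z / g z = 1 := div_self hgz
  have hh : AnalyticAt ℂ h z := by
    refine analyticAt_const.mul ?_
    exact ((hq.clog (by rw [hq1]; exact Complex.one_mem_slitPlane)).div analyticAt_const hn0).cexp
  have hhz : h z = c := by
    simp [hhdef, hq1, Complex.log_one]
  have hgev : ∀ᶠ w in nhds z, g w ≠ 0 := hg.continuousAt.eventually_ne hgz
  have hpow : ∀ᶠ w in nhds z, h w ^ n = g w := by
    filter_upwards [hgev] with w hw
    rw [hhdef]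
    simp only
    rw [mul_pow, hc, ← Complex.exp_nat_mul, mul_div_cancel₀ _ hn0,
      Complex.exp_log (div_ne_zero hw hgz), mul_comm, div_mul_cancel₀ _ hgz]
  set φ : ℂ → ℂ := fun w => (w - z) * h w with hφdef
  have hφ : AnalyticAt ℂ φ z := (analyticAt_id.sub analyticAt_const).mul hh
  have hφz : φ z = 0 := by simp [hφdef]
  have hevφ : ∀ᶠ w in nhds z, f w - ζ = φ w ^ n := by
    filter_upwards [hev, hpow] with w h1 h2
    rw [h1, smul_eq_mul, hφdef]
    simp only
    rw [mul_pow, h2]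
  have hd : HasDerivAt φ (h z) z := by
    have h1 : HasDerivAt (fun w : ℂ => w - z) 1 z := (hasDerivAt_id z).sub_const z
    have h2 : HasDerivAt h (deriv h z) z := hh.differentiableAt.hasDerivAt
    have := h1.mul h2
    simp only [sub_self, zero_mul, one_mul, add_zero] at this
    exact this
  obtain ⟨p, hp⟩ := hφ
  have hsd : HasStrictDerivAt φ (h z) z := by
    have h3 := hp.hasStrictDerivAt
    have h4 := hp.hasDerivAt
    rwa [h4.unique hd] at h3
  have hmap : Filter.map φ (nhds z) = nhds 0 := by
    have := hsd.map_nhds_eq (by rw [hhz]; exact hc0)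
    rwa [hφz] at this
  refine ⟨n, hn1, hmult, ?_⟩
  intro t ht
  have hV : t ∩ U ∩ {w | f w - ζ = φ w ^ n} ∈ nhds z :=
    Filter.inter_mem (Filter.inter_mem ht (hU.mem_nhds hz)) hevφ
  have himg : φ '' (t ∩ U ∩ {w | f w - ζ = φ w ^ n}) ∈ nhds (0 : ℂ) := by
    rw [← hmap]; exact Filter.image_mem_map hV
  obtain ⟨ε, hε, hball⟩ := Metric.mem_nhds_iff.mp himg
  refine ⟨ε ^ n, pow_pos hε n, ?_⟩
  intro ζ' hζ' hdist
  set x : ℂ := ζ' - ζ with hxdef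
  have hx0 : x ≠ 0 := sub_ne_zero.mpr hζ'
  set c' : ℂ := Complex.exp (Complex.log x / n) with hc'def
  have hc'0 : c' ≠ 0 := Complex.exp_ne_zero _
  have hc' : c' ^ n = x := by
    rw [hc'def, ← Complex.exp_nat_mul, mul_div_cancel₀ _ hn0, Complex.exp_log hx0]
  have habs : ‖c'‖ < ε := by
    have h1 : ‖c'‖ ^ n < ε ^ n := by
      rw [← norm_pow, hc']
      simpa [hxdef, Complex.dist_eq] using hdist
    by_contra hcon
    push_neg at hcon
    exact absurd (pow_le_pow_left₀ (le_of_lt hε) hcon n) (not_le.mpr h1)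
  set ω : ℂ := Complex.exp (2 * Real.pi * Complex.I / n) with hωdef
  have hω : IsPrimitiveRoot ω n := Complex.isPrimitiveRoot_exp n (by omega)
  have hωn : ω ^ n = 1 := hω.pow_eq_one
  have hωabs : ‖ω‖ = 1 := by
    have h1 : ‖ω‖ ^ n = 1 := by rw [← norm_pow, hωn, norm_one]
    rcases (pow_eq_one_iff_cases.mp h1) with h | h | h
    · omega
    · exact h
    · exfalso
      have := norm_nonneg ω
      rw [h.1] at this; linarith
  have hwex : ∀ k : ℕ, ∃ w, w ∈ t ∩ U ∩ {w | f w - ζ = φ w ^ n} ∧ φ w = c' * ω ^ k := by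
    intro k
    have hmem : c' * ω ^ k ∈ Metric.ball (0 : ℂ) ε := by
      rw [Metric.mem_ball, Complex.dist_eq, sub_zero, norm_mul, norm_pow, hωabs, one_pow, mul_one]
      exact habs
    obtain ⟨w, hw1, hw2⟩ := hball hmem
    exact ⟨w, hw1, hw2⟩
  choose w hw1 hw2 using hwex
  refine ⟨(Finset.range n).image w, ?_, ?_⟩
  · rw [Finset.card_image_of_injOn, Finset.card_range]
    intro i hi j hj hij
    have : c' * ω ^ i = c' * ω ^ j := by rw [← hw2 i, ← hw2 j, hij]
    exact hω.pow_inj (Finset.mem_range.mp (Finset.mem_coe.mp hi))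
      (Finset.mem_range.mp (Finset.mem_coe.mp hj)) (mul_left_cancel₀ hc'0 this)
  · intro v hv
    obtain ⟨k, _, rfl⟩ := Finset.mem_image.mp hv
    obtain ⟨⟨hwt, hwU⟩, hweq⟩ := hw1 k
    refine ⟨hwt, hwU, ?_⟩
    have : f (w k) - ζ = x := by
      rw [hweq, hw2 k, mul_pow, hc', ← pow_mul, mul_comm k n, pow_mul, hωn, one_pow, mul_one]
    rw [hxdef] at this
    linear_combination this

set_option maxHeartbeats 1000000 in
/-- a bound `N` on the number of solutions of `f z = ζ`, counted with
multiplicity, holding for all `ζ` in a dense set, extends to all `ζ ∈ ℂ`. -/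
theorem inverse_bound_on_dense_set
    (U : Set ℂ) (hU : IsOpen U) (hUconn : IsConnected U)
    (f : ℂ → ℂ) (hf : DifferentiableOn ℂ f U)
    (hnc : ¬ ∃ c : ℂ, EqOn f (fun _ => c) U)
    (D : Set ℂ) (hD : Dense D) (N : ℕ)
    (hbound : ∀ ζ ∈ D, ∀ S : Finset ℂ, (∀ z ∈ S, z ∈ U ∧ f z = ζ) →
      ∑ z ∈ S, solutionMultiplicity f ζ z ≤ (N : ℕ∞)) :
    ∀ ζ : ℂ, ∀ S : Finset ℂ, (∀ z ∈ S, z ∈ U ∧ f z = ζ) →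
      ∑ z ∈ S, solutionMultiplicity f ζ z ≤ (N : ℕ∞) := by
  intro ζ S hS
  have hanU : AnalyticOnNhd ℂ (fun w => f w - ζ) U := fun w hw =>
    (hf.analyticAt (hU.mem_nhds hw)).sub analyticAt_const
  have hne : ∀ z ∈ U, ¬ ∀ᶠ w in nhds z, f w = ζ := by
    intro z hz h
    apply hnc
    refine ⟨ζ, fun w hw => ?_⟩
    have heq : EqOn (fun w => f w - ζ) 0 U :=
      hanU.eqOn_zero_of_preconnected_of_eventuallyEq_zero hUconn.isPreconnected hz
        (h.mono fun w hw => by simp [hw])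
    have := heq hw
    simpa [sub_eq_zero] using this
  rcases S.eq_empty_or_nonempty with rfl | hSne
  · simp
  have key : ∀ z ∈ S, ∃ n : ℕ, 1 ≤ n ∧ solutionMultiplicity f ζ z = n ∧
      ∀ t ∈ nhds z, ∃ ε > 0, ∀ ζ' : ℂ, ζ' ≠ ζ → dist ζ' ζ < ε →
        ∃ T : Finset ℂ, T.card = n ∧ ∀ w ∈ T, w ∈ t ∧ w ∈ U ∧ f w = ζ' := fun z hz =>
    local_count U hU f hf ζ z (hS z hz).1 (hS z hz).2 (hne z (hS z hz).1)
  choose! n hn1 hnmult hloc using key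
  obtain ⟨δ, hδ0, hδ⟩ : ∃ δ > 0, ∀ z ∈ S, ∀ z' ∈ S, z ≠ z' →
      Disjoint (Metric.ball z δ) (Metric.ball z' δ) := by
    rcases S.offDiag.eq_empty_or_nonempty with hP | hP
    · refine ⟨1, one_pos, fun z hz z' hz' hzz' => ?_⟩
      exfalso
      have : (z, z') ∈ S.offDiag := Finset.mem_offDiag.mpr ⟨hz, hz', hzz'⟩
      rw [hP] at this
      exact absurd this (Finset.notMem_empty _)
    · refine ⟨(S.offDiag.inf' hP fun p => dist p.1 p.2) / 2, ?_, ?_⟩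
      · apply div_pos _ two_pos
        rw [Finset.lt_inf'_iff]
        rintro ⟨a, b⟩ hab
        exact dist_pos.mpr (Finset.mem_offDiag.mp hab).2.2
      · intro z hz z' hz' hzz'
        apply Metric.ball_disjoint_ball
        have hmemp : (z, z') ∈ S.offDiag := Finset.mem_offDiag.mpr ⟨hz, hz', hzz'⟩
        have hle : (S.offDiag.inf' hP fun p => dist p.1 p.2) ≤ dist z z' :=
          Finset.inf'_le (fun p : ℂ × ℂ => dist p.1 p.2) hmemp
        linarith
  have hloc' : ∀ z ∈ S, ∃ ε > 0, ∀ ζ' : ℂ, ζ' ≠ ζ → dist ζ' ζ < ε →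
      ∃ T : Finset ℂ, T.card = n z ∧ ∀ w ∈ T, w ∈ Metric.ball z δ ∧ w ∈ U ∧ f w = ζ' :=
    fun z hz => hloc z hz (Metric.ball z δ) (Metric.ball_mem_nhds z hδ0)
  choose! ε hε0 hεT using hloc'
  set ε' : ℝ := S.inf' hSne ε with hε'def
  have hε'0 : 0 < ε' := by
    rw [hε'def, Finset.lt_inf'_iff]
    exact hε0
  have hO : IsOpen (Metric.ball ζ ε' \ {ζ}) :=
    Metric.isOpen_ball.sdiff isClosed_singleton
  have hOne : (Metric.ball ζ ε' \ {ζ}).Nonempty := by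
    refine ⟨ζ + (ε' / 2 : ℝ), ?_, ?_⟩
    · rw [Metric.mem_ball, Complex.dist_eq, add_sub_cancel_left, Complex.norm_real, Real.norm_eq_abs,
        abs_of_pos (by linarith)]
      linarith
    · simp only [mem_singleton_iff, add_eq_left]
      intro h
      have : (ε' / 2 : ℝ) = 0 := by exact_mod_cast h
      linarith
  obtain ⟨ζ', hζ'D, hζ'O⟩ := hD.exists_mem_open hO hOne
  have hζ'ne : ζ' ≠ ζ := hζ'O.2
  have hζ'dist : dist ζ' ζ < ε' := Metric.mem_ball.mp hζ'O.1
  have hTex : ∀ z ∈ S, ∃ T : Finset ℂ, T.card = n z ∧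
      ∀ w ∈ T, w ∈ Metric.ball z δ ∧ w ∈ U ∧ f w = ζ' := fun z hz =>
    hεT z hz ζ' hζ'ne (lt_of_lt_of_le hζ'dist (Finset.inf'_le _ hz))
  choose! T hTcard hTmem using hTex
  set BigT : Finset ℂ := S.biUnion T with hBigT
  have hdisj : ∀ z ∈ S, ∀ z' ∈ S, z ≠ z' → Disjoint (T z) (T z') := by
    intro z hz z' hz' hzz'
    rw [Finset.disjoint_left]
    intro a ha ha'
    exact Set.disjoint_left.mp (hδ z hz z' hz' hzz') (hTmem z hz a ha).1 (hTmem z' hz' a ha').1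
  have hcard : BigT.card = ∑ z ∈ S, n z := by
    rw [hBigT, Finset.card_biUnion hdisj]
    exact Finset.sum_congr rfl fun z hz => hTcard z hz
  have hmemT : ∀ w ∈ BigT, w ∈ U ∧ f w = ζ' := by
    intro w hw
    obtain ⟨z, hz, hwz⟩ := Finset.mem_biUnion.mp hw
    exact ⟨(hTmem z hz w hwz).2.1, (hTmem z hz w hwz).2.2⟩
  have hupper := hbound ζ' hζ'D BigT hmemT
  have hlower : (BigT.card : ℕ∞) ≤ ∑ w ∈ BigT, solutionMultiplicity f ζ' w := by
    calc (BigT.card : ℕ∞) = ∑ _w ∈ BigT, (1 : ℕ∞) := by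
          rw [Finset.sum_const, nsmul_eq_mul, mul_one]
      _ ≤ ∑ w ∈ BigT, solutionMultiplicity f ζ' w := by
          apply Finset.sum_le_sum
          intro w hw
          exact one_le_solutionMultiplicity
            ((hf.analyticAt (hU.mem_nhds (hmemT w hw).1)).sub analyticAt_const)
            (hmemT w hw).2
  have hfinal : ((∑ z ∈ S, n z : ℕ) : ℕ∞) ≤ (N : ℕ∞) := by
    rw [← hcard]
    exact le_trans hlower hupper
  calc ∑ z ∈ S, solutionMultiplicity f ζ z = ∑ z ∈ S, ((n z : ℕ) : ℕ∞) :=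
        Finset.sum_congr rfl fun z hz => hnmult z hz
    _ = ((∑ z ∈ S, n z : ℕ) : ℕ∞) := (Nat.cast_sum _ _).symm
    _ ≤ (N : ℕ∞) := hfinal
end

section
/- Let μ_n, μ be Borel probability measures on ℝ with μ_n → μ weakly, all supported in a fixed compact set. Suppose there exists N ∈ ℕ such that for every n and every ζ ∈ ℂ the equation G_{μ_n}(z) = ζ has at most N solutions in ℂ \ ℝ counted with multiplicity. Then for every ζ ∈ ℂ, the equation G_μ(z) = ζ has at most N solutions in ℂ \ ℝ counted with multiplicity. -/
open MeasureTheory Filter Set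
open Metric


lemma stub_ne {z : ℂ} (hz : z.im ≠ 0) (x : ℝ) : z - (x:ℂ) ≠ 0 := by
  intro h; apply hz
  have : z = (x:ℂ) := sub_eq_zero.mp h
  rw [this]; simp

lemma stInt_norm_le {z : ℂ} (hz : z.im ≠ 0) (x : ℝ) :
    ‖(z - (x:ℂ))⁻¹‖ ≤ |z.im|⁻¹ := by
  rw [norm_inv]
  apply inv_anti₀ (abs_pos.mpr hz)
  calc |z.im| = |(z - (x:ℂ)).im| := by simp
    _ ≤ ‖z - (x:ℂ)‖ := Complex.abs_im_le_norm _

lemma stInt_continuous (z : ℂ) (hz : z.im ≠ 0) :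
    Continuous (fun x : ℝ => (z - (x:ℂ))⁻¹) := by
  apply Continuous.inv₀ (by continuity)
  exact fun x => stub_ne hz x

lemma stInt_integrable (μ : Measure ℝ) [IsFiniteMeasure μ] {z : ℂ} (hz : z.im ≠ 0) :
    Integrable (fun x : ℝ => (z - (x:ℂ))⁻¹) μ :=
  ⟨(stInt_continuous z hz).aestronglyMeasurable,
    HasFiniteIntegral.of_bounded (C := |z.im|⁻¹) (ae_of_all _ fun x => stInt_norm_le hz x)⟩

lemma stG_norm_le (μ : Measure ℝ) [IsProbabilityMeasure μ] {z : ℂ} (hz : z.im ≠ 0) :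
    ‖∫ x : ℝ, (z - (x:ℂ))⁻¹ ∂μ‖ ≤ |z.im|⁻¹ := by
  have := norm_integral_le_of_norm_le_const (μ := μ)
    (ae_of_all _ fun x => stInt_norm_le (z := z) hz x)
  simpa using this

lemma im_ge_of_close {z₀ z : ℂ} (h : dist z z₀ < |z₀.im| / 2) : |z₀.im| / 2 ≤ |z.im| := by
  have h1 : |z.im - z₀.im| ≤ dist z z₀ := by
    rw [Complex.dist_eq]
    have : z.im - z₀.im = (z - z₀).im := by simp
    rw [this]
    exact Complex.abs_im_le_norm _
  have h2 := abs_sub_abs_le_abs_sub z₀.im z.im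
  have h3 : |z₀.im - z.im| = |z.im - z₀.im| := abs_sub_comm _ _
  linarith

lemma stG_hasDerivAt (μ : Measure ℝ) [IsFiniteMeasure μ] {z₀ : ℂ} (hz : z₀.im ≠ 0) :
    HasDerivAt (fun z => ∫ x : ℝ, (z - (x:ℂ))⁻¹ ∂μ)
      (∫ x : ℝ, -1 / (z₀ - (x:ℂ)) ^ 2 ∂μ) z₀ := by
  set d : ℝ := |z₀.im| / 2 with hd
  have hd0 : 0 < d := by positivity
  have him : ∀ z ∈ ball z₀ d, |z₀.im| / 2 ≤ |z.im| := fun z hz => im_ge_of_close hz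
  have hne : ∀ z ∈ ball z₀ d, ∀ x : ℝ, z - (x:ℂ) ≠ 0 := by
    intro z hzb x
    have := him z hzb
    have : z.im ≠ 0 := by intro h; rw [h] at this; simp at this; linarith
    exact stub_ne this x
  have hnorm : ∀ z ∈ ball z₀ d, ∀ x : ℝ, ‖(z - (x:ℂ))⁻¹‖ ≤ d⁻¹ := by
    intro z hzb x
    rw [norm_inv]
    apply inv_anti₀ hd0
    calc d ≤ |z.im| := him z hzb
      _ = |(z - (x:ℂ)).im| := by simp
      _ ≤ ‖z - (x:ℂ)‖ := Complex.abs_im_le_norm _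
  refine (hasDerivAt_integral_of_dominated_loc_of_lip (F := fun z (x:ℝ) => (z - (x:ℂ))⁻¹)
    (F' := fun (x:ℝ) => -1 / (z₀ - (x:ℂ)) ^ 2) (bound := fun _ => (d * d)⁻¹) (ball_mem_nhds z₀ hd0) ?_ ?_ ?_ ?_ ?_ ?_).2
  · filter_upwards [ball_mem_nhds z₀ hd0] with z hzb
    exact Continuous.aestronglyMeasurable (by
      apply Continuous.inv₀ (by continuity)
      exact fun x => hne z hzb x)
  · exact stInt_integrable μ hz
  · exact Continuous.aestronglyMeasurable (by
      apply Continuous.div continuous_const (by continuity)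
      intro x
      exact pow_ne_zero 2 (stub_ne hz x))
  · filter_upwards with x
    apply LipschitzOnWith.of_dist_le_mul
    intro z hzb z' hzb'
    have ha : z - (x:ℂ) ≠ 0 := hne z hzb x
    have hb : z' - (x:ℂ) ≠ 0 := hne z' hzb' x
    have key : (z - (x:ℂ))⁻¹ - (z' - (x:ℂ))⁻¹ = (z' - z) * ((z - (x:ℂ))⁻¹ * (z' - (x:ℂ))⁻¹) := by
      field_simp
      ring
    rw [dist_eq_norm, key, norm_mul, norm_mul, norm_inv, norm_inv]
    have h1 : ‖(z:ℂ) - x‖⁻¹ ≤ d⁻¹ := by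
      have := hnorm z hzb x; rwa [norm_inv] at this
    have h2 : ‖(z':ℂ) - x‖⁻¹ ≤ d⁻¹ := by
      have := hnorm z' hzb' x; rwa [norm_inv] at this
    have h3 : ‖z' - z‖ = dist z z' := by rw [dist_eq_norm, norm_sub_rev]
    have hC : ((Real.nnabs ((d*d)⁻¹) : NNReal) : ℝ) = d⁻¹ * d⁻¹ := by
      rw [Real.coe_nnabs, abs_of_nonneg (by positivity), mul_inv]
    rw [hC, ← h3]
    have hn1 : (0:ℝ) ≤ ‖(z:ℂ) - x‖⁻¹ := by positivity
    have hn2 : (0:ℝ) ≤ ‖z' - z‖ := norm_nonneg _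
    calc ‖z' - z‖ * (‖(z:ℂ) - x‖⁻¹ * ‖(z':ℂ) - x‖⁻¹) ≤ ‖z' - z‖ * (d⁻¹ * d⁻¹) := by
          apply mul_le_mul_of_nonneg_left _ hn2
          exact mul_le_mul h1 h2 (by positivity) (by positivity)
      _ = d⁻¹ * d⁻¹ * ‖z' - z‖ := by ring
  · exact integrable_const _
  · filter_upwards with x
    exact ((hasDerivAt_id z₀).sub_const (x:ℂ)).inv (stub_ne hz x)

lemma stG_analyticAt (μ : Measure ℝ) [IsFiniteMeasure μ] {z : ℂ} (hz : z.im ≠ 0) :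
    AnalyticAt ℂ (fun z => ∫ x : ℝ, (z - (x:ℂ))⁻¹ ∂μ) z := by
  have hopen : IsOpen {w : ℂ | w.im ≠ 0} :=
    IsOpen.preimage Complex.continuous_im isOpen_compl_singleton
  apply DifferentiableOn.analyticAt (s := {w : ℂ | w.im ≠ 0})
  · intro w hw
    exact (stG_hasDerivAt μ hw).differentiableAt.differentiableWithinAt
  · exact hopen.mem_nhds hz

lemma stG_ne_zero (ν : Measure ℝ) [IsProbabilityMeasure ν] {Γ : Set ℝ} (hΓ : IsCompact Γ)
    (hsupp : ν Γᶜ = 0) {z : ℂ} (hz : z.im ≠ 0) :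
    (∫ x : ℝ, (z - (x:ℂ))⁻¹ ∂ν) ≠ 0 := by
  obtain ⟨R, hR⟩ := hΓ.isBounded.subset_closedBall 0
  set R' : ℝ := max R 0 with hR'
  have hΓR : ∀ x ∈ Γ, |x| ≤ R' := by
    intro x hx
    have := hR hx
    rw [Real.closedBall_eq_Icc] at this
    rw [abs_le]
    constructor <;> [linarith [this.1, le_max_left R 0]; linarith [this.2, le_max_left R 0]]
  set C : ℝ := (‖z‖ + R') ^ 2 with hC
  have hzabs : 0 < ‖z‖ := by
    apply norm_pos_iff.mpr
    intro h; rw [h] at hz; simp at hz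
  have hC0 : 0 < C := by positivity
  -- the function x ↦ (normSq (z - x))⁻¹
  have hbound : ∀ x : ℝ, x ∈ Γ → C⁻¹ ≤ (Complex.normSq (z - (x:ℂ)))⁻¹ := by
    intro x hx
    apply inv_anti₀
    · rw [Complex.normSq_pos]; exact stub_ne hz x
    · have h1 : ‖z - (x:ℂ)‖ ≤ ‖z‖ + R' := by
        have h2 : ‖z - (x:ℂ)‖ ≤ ‖z‖ + ‖((x:ℂ))‖ := norm_sub_le _ _
        have h3 : ‖((x:ℂ))‖ ≤ R' := by
          rw [Complex.norm_real, Real.norm_eq_abs]; exact hΓR x hx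
        linarith
      calc Complex.normSq (z - (x:ℂ)) = ‖z - (x:ℂ)‖ ^ 2 := (Complex.sq_norm _).symm
        _ ≤ (‖z‖ + R') ^ 2 := by
            apply pow_le_pow_left₀ (norm_nonneg _) h1
  have hint : Integrable (fun x : ℝ => (Complex.normSq (z - (x:ℂ)))⁻¹) ν := by
    refine ⟨Continuous.aestronglyMeasurable ?_, HasFiniteIntegral.of_bounded
      (C := (z.im ^ 2)⁻¹) (ae_of_all _ ?_)⟩
    · apply Continuous.inv₀ (by continuity)
      intro x
      exact (Complex.normSq_pos.mpr (stub_ne hz x)).ne'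
    · intro x
      have him0 : 0 < |z.im| := abs_pos.mpr hz
      rw [Real.norm_eq_abs, abs_of_nonneg (inv_nonneg.mpr (Complex.normSq_nonneg _))]
      apply inv_anti₀ (by rw [← sq_abs]; exact pow_pos him0 2)
      calc z.im ^ 2 = (z - (x:ℂ)).im ^ 2 := by simp
        _ ≤ Complex.normSq (z - (x:ℂ)) := by
            rw [Complex.normSq_apply]; nlinarith [sq_nonneg (z - (x:ℂ)).re]
  have hae : ∀ᵐ x ∂ν, x ∈ Γ := by
    rw [ae_iff]
    exact hsupp
  have hpos : C⁻¹ ≤ ∫ x : ℝ, (Complex.normSq (z - (x:ℂ)))⁻¹ ∂ν := by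
    have h1 : (C⁻¹ : ℝ) = ∫ _ : ℝ, C⁻¹ ∂ν := by simp
    rw [h1]
    apply integral_mono_ae (integrable_const _) hint
    filter_upwards [hae] with x hx
    exact hbound x hx
  have him : (∫ x : ℝ, (z - (x:ℂ))⁻¹ ∂ν).im
      = -z.im * ∫ x : ℝ, (Complex.normSq (z - (x:ℂ)))⁻¹ ∂ν := by
    have hcim := integral_im (𝕜 := ℂ) (μ := ν) (stInt_integrable ν hz)
    simp only [RCLike.im_to_complex] at hcim
    rw [← hcim]
    rw [← MeasureTheory.integral_const_mul]
    congr 1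
    ext x
    rw [Complex.inv_im]
    have : (z - (x:ℂ)).im = z.im := by simp
    rw [this]
    ring
  intro h
  rw [h] at him
  simp only [Complex.zero_im] at him
  have : -z.im * ∫ x : ℝ, (Complex.normSq (z - (x:ℂ)))⁻¹ ∂ν ≠ 0 := by
    apply mul_ne_zero (neg_ne_zero.mpr hz)
    have : (0:ℝ) < C⁻¹ := by positivity
    linarith [hpos]
  exact this him.symm

lemma stG_const_aux (ν : Measure ℝ) [IsProbabilityMeasure ν] {Γ : Set ℝ} (hΓ : IsCompact Γ)
    (hsupp : ν Γᶜ = 0) {H : Set ℂ} (hconv : Convex ℝ H) (hopen : IsOpen H)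
    (hH : ∀ z ∈ H, z.im ≠ 0)
    (hpts : ∀ y : ℝ, 1 ≤ y → ∃ z ∈ H, |z.im| = y)
    {z₀ : ℂ} (hz₀ : z₀ ∈ H) {c : ℂ}
    (h : (fun w => (∫ x : ℝ, (w - (x:ℂ))⁻¹ ∂ν) - c) =ᶠ[nhds z₀] 0) : False := by
  have han : AnalyticOnNhd ℂ (fun w => (∫ x : ℝ, (w - (x:ℂ))⁻¹ ∂ν) - c) H := by
    intro w hw
    exact (stG_analyticAt ν (hH w hw)).sub analyticAt_const
  have heq : EqOn (fun w => (∫ x : ℝ, (w - (x:ℂ))⁻¹ ∂ν) - c) 0 H :=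
    han.eqOn_zero_of_preconnected_of_eventuallyEq_zero hconv.isPreconnected hz₀ h
  have hval : ∀ y : ℝ, 1 ≤ y → ‖c‖ ≤ y⁻¹ := by
    intro y hy
    obtain ⟨z, hzH, hzim⟩ := hpts y hy
    have h1 : (∫ x : ℝ, (z - (x:ℂ))⁻¹ ∂ν) - c = 0 := heq hzH
    have h2 : c = ∫ x : ℝ, (z - (x:ℂ))⁻¹ ∂ν := by
      rw [sub_eq_zero] at h1; exact h1.symm
    rw [h2]
    have him : z.im ≠ 0 := hH z hzH
    calc ‖∫ x : ℝ, (z - (x:ℂ))⁻¹ ∂ν‖ ≤ |z.im|⁻¹ := stG_norm_le ν him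
      _ = y⁻¹ := by rw [hzim]
  have hc0 : c = 0 := by
    by_contra hc
    have hnc : 0 < ‖c‖ := norm_pos_iff.mpr hc
    set y : ℝ := max 1 (2 / ‖c‖) with hy
    have hy1 : 1 ≤ y := le_max_left _ _
    have hy2 : 2 / ‖c‖ ≤ y := le_max_right _ _
    have hyp : 0 < y := by linarith
    have h3 := hval y hy1
    have h4 : y⁻¹ ≤ ‖c‖ / 2 := by
      have h5 : (2 / ‖c‖)⁻¹ = ‖c‖ / 2 := by rw [inv_div]
      rw [← h5]
      exact inv_anti₀ (by positivity) hy2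
    linarith
  rw [hc0] at heq
  have := heq hz₀
  simp only [Pi.zero_apply, sub_zero] at this
  exact stG_ne_zero ν hΓ hsupp (hH z₀ hz₀) this

lemma stG_not_eventually_const (ν : Measure ℝ) [IsProbabilityMeasure ν] {Γ : Set ℝ}
    (hΓ : IsCompact Γ) (hsupp : ν Γᶜ = 0) {z₀ : ℂ} (hz : z₀.im ≠ 0) (c : ℂ) :
    ¬ (fun w => (∫ x : ℝ, (w - (x:ℂ))⁻¹ ∂ν) - c) =ᶠ[nhds z₀] 0 := by
  intro h
  rcases hz.lt_or_gt with hneg | hpos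
  · exact stG_const_aux ν hΓ hsupp (convex_halfSpace_im_lt 0) (isOpen_lt Complex.continuous_im
      continuous_const) (fun z hz => ne_of_lt hz) (fun y hy => ⟨-(Complex.I * y), by
        simp only [mem_setOf_eq]
        constructor
        · simp; linarith
        · simp; linarith⟩) hneg h
  · exact stG_const_aux ν hΓ hsupp (convex_halfSpace_im_gt 0) (isOpen_lt continuous_const
      Complex.continuous_im) (fun z hz => ne_of_gt hz) (fun y hy => ⟨Complex.I * y, by
        simp only [mem_setOf_eq]
        constructor
        · simp; linarith
        · simp; linarith⟩) hpos h

lemma local_m_to_one {f : ℂ → ℂ} {z₀ ζ : ℂ} {m : ℕ}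
    (hf : AnalyticAt ℂ (fun w => f w - ζ) z₀)
    (hm : analyticOrderAt (fun w => f w - ζ) z₀ = (m : ℕ∞)) {ε : ℝ} (hε : 0 < ε) :
    ∃ ρ > 0, ∀ ζ' : ℂ, ζ' ≠ ζ → dist ζ' ζ < ρ →
      ∃ T : Finset ℂ, T.card = m ∧ (↑T : Set ℂ) ⊆ ball z₀ ε ∧ ∀ w ∈ T, f w = ζ' := by
  classical
  rcases Nat.eq_zero_or_pos m with hm0 | hmpos
  · exact ⟨1, one_pos, fun ζ' _ _ => ⟨∅, by simp [hm0], by simp, by simp⟩⟩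
  have hmne : (m:ℂ) ≠ 0 := Nat.cast_ne_zero.mpr hmpos.ne'
  have hmner : (m:ℝ) ≠ 0 := Nat.cast_ne_zero.mpr hmpos.ne'
  obtain ⟨h, h_an, h_ne, h_eq⟩ := (hf.analyticOrderAt_eq_natCast (n := m)).mp hm
  set a : ℂ := (((m:ℝ)⁻¹ : ℝ) : ℂ) with ha
  have hma : (m:ℂ) * a = 1 := by
    rw [ha]; push_cast; field_simp
  set u : ℂ → ℂ := fun w => h w * (h z₀)⁻¹ with hu
  have hu_an : AnalyticAt ℂ u z₀ := h_an.mul analyticAt_const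
  have huz : u z₀ = 1 := mul_inv_cancel₀ h_ne
  have hlog_an : AnalyticAt ℂ (fun w => Complex.log (u w)) z₀ :=
    hu_an.clog (by rw [huz]; exact Complex.one_mem_slitPlane)
  set g : ℂ → ℂ := fun w => Complex.exp (a * Complex.log (h z₀)) *
    Complex.exp (a * Complex.log (u w)) with hg
  have hg_an : AnalyticAt ℂ g z₀ := analyticAt_const.mul ((analyticAt_const.mul hlog_an).cexp)
  have hgz : g z₀ = Complex.exp (a * Complex.log (h z₀)) := by
    rw [hg]; simp only [huz, Complex.log_one, mul_zero, Complex.exp_zero, mul_one]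
  have hgz0 : g z₀ ≠ 0 := by rw [hgz]; exact Complex.exp_ne_zero _
  have hpow_exp : ∀ v : ℂ, v ≠ 0 → Complex.exp (a * Complex.log v) ^ m = v := by
    intro v hv
    rw [← Complex.exp_nat_mul, ← mul_assoc, hma, one_mul, Complex.exp_log hv]
  have hne_ev : ∀ᶠ w in nhds z₀, h w ≠ 0 := h_an.continuousAt.eventually_ne h_ne
  have hgm : ∀ᶠ w in nhds z₀, g w ^ m = h w := by
    filter_upwards [hne_ev] with w hw
    rw [hg]
    have huw : u w ≠ 0 := mul_ne_zero hw (inv_ne_zero h_ne)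
    rw [mul_pow, hpow_exp _ h_ne, hpow_exp _ huw, hu]
    field_simp
  set φ : ℂ → ℂ := fun w => (w - z₀) * g w with hφ
  have hφ_eq : ∀ᶠ w in nhds z₀, f w - ζ = φ w ^ m := by
    filter_upwards [h_eq, hgm] with w hw1 hw2
    rw [hw1, smul_eq_mul, hφ]
    simp only
    rw [mul_pow, hw2]
  have hφ_an : AnalyticAt ℂ φ z₀ := ((analyticAt_id.sub analyticAt_const)).mul hg_an
  have hφz : φ z₀ = 0 := by rw [hφ]; simp
  have hφderiv : HasDerivAt φ (g z₀) z₀ := by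
    have h1 : HasDerivAt (fun w : ℂ => w - z₀) 1 z₀ := (hasDerivAt_id z₀).sub_const z₀
    have h2 : HasDerivAt g (deriv g z₀) z₀ := hg_an.differentiableAt.hasDerivAt
    have h3 : HasDerivAt (fun w => (w - z₀) * g w) _ z₀ := h1.mul h2
    simpa using h3
  have hstrict : HasStrictDerivAt φ (deriv φ z₀) z₀ :=
    (hφ_an.contDiffAt (n := 1)).hasStrictDerivAt one_ne_zero
  have hderiv_ne : deriv φ z₀ ≠ 0 := by rw [hφderiv.deriv]; exact hgz0
  have hmap : Filter.map φ (nhds z₀) = nhds 0 := by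
    have := hstrict.map_nhds_eq hderiv_ne
    rwa [hφz] at this
  have hUmem : {w : ℂ | f w - ζ = φ w ^ m ∧ w ∈ ball z₀ ε} ∈ nhds z₀ :=
    hφ_eq.and (Filter.eventually_of_mem (ball_mem_nhds z₀ hε) (fun w hw => hw))
  have himg : φ '' {w : ℂ | f w - ζ = φ w ^ m ∧ w ∈ ball z₀ ε} ∈ nhds (0:ℂ) := by
    rw [← hmap]
    exact Filter.image_mem_map hUmem
  obtain ⟨r, hr0, hball⟩ := Metric.mem_nhds_iff.mp himg
  refine ⟨r ^ m, pow_pos hr0 m, ?_⟩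
  intro ζ' hζ'ne hζ'dist
  set t : ℂ := ζ' - ζ with hts
  have ht0 : t ≠ 0 := sub_ne_zero.mpr hζ'ne
  have habs_t : ‖t‖ < r ^ m := by
    rw [hts]; rw [Complex.dist_eq] at hζ'dist; exact hζ'dist
  set s₀ : ℂ := Complex.exp (a * Complex.log t) with hs₀
  have hs₀m : s₀ ^ m = t := hpow_exp t ht0
  have hs₀0 : s₀ ≠ 0 := Complex.exp_ne_zero _
  have habs_s₀ : ‖s₀‖ < r := by
    rw [hs₀, Complex.norm_exp]
    have hre : (a * Complex.log t).re = (m:ℝ)⁻¹ * Real.log ‖t‖ := by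
      rw [ha, Complex.re_ofReal_mul, Complex.log_re]
    rw [hre]
    rw [← Real.exp_log hr0]
    apply Real.exp_lt_exp.mpr
    have hlt : Real.log ‖t‖ < Real.log (r ^ m) :=
      Real.log_lt_log (norm_pos_iff.mpr ht0) habs_t
    rw [Real.log_pow] at hlt
    have hmpos' : (0:ℝ) < (m:ℝ)⁻¹ := by positivity
    calc (m:ℝ)⁻¹ * Real.log ‖t‖ < (m:ℝ)⁻¹ * ((m:ℕ) * Real.log r) :=
          mul_lt_mul_of_pos_left hlt hmpos'
      _ = Real.log r := by field_simp
  set ω : ℂ := Complex.exp (2 * Real.pi * Complex.I / m) with hω'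
  have hω : IsPrimitiveRoot ω m := Complex.isPrimitiveRoot_exp m hmpos.ne'
  have habs_ω : ‖ω‖ = 1 := by
    have h1 : ω ^ m = 1 := hω.pow_eq_one
    have h2 : ‖ω‖ ^ m = 1 := by
      rw [← norm_pow, h1, norm_one]
    have h3 : (0:ℝ) ≤ ‖ω‖ := norm_nonneg _
    rcases lt_trichotomy (‖ω‖) 1 with hlt | heq | hgt
    · exfalso
      have := pow_lt_one₀ h3 hlt hmpos.ne'
      rw [h2] at this; exact lt_irrefl _ this
    · exact heq
    · exfalso
      have := one_lt_pow₀ hgt hmpos.ne'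
      rw [h2] at this; exact lt_irrefl _ this
  set Troots : Finset ℂ := (Finset.range m).image (fun k => ω ^ k * s₀) with hT
  have hcardT : Troots.card = m := by
    rw [hT, Finset.card_image_of_injOn (hω.injOn_pow_mul hs₀0), Finset.card_range]
  have hrootval : ∀ s ∈ Troots, s ^ m = t ∧ ‖s‖ < r := by
    intro s hs
    obtain ⟨k, _, rfl⟩ := Finset.mem_image.mp hs
    constructor
    · rw [mul_pow, ← pow_mul, mul_comm k m, pow_mul, hω.pow_eq_one, one_pow, one_mul, hs₀m]
    · rw [norm_mul, norm_pow, habs_ω, one_pow, one_mul]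
      exact habs_s₀
  have hsel : ∀ s ∈ Troots, ∃ w, (f w - ζ = φ w ^ m ∧ w ∈ ball z₀ ε) ∧ φ w = s := by
    intro s hs
    have hmem : s ∈ ball (0:ℂ) r := by
      rw [mem_ball, Complex.dist_eq, sub_zero]
      exact (hrootval s hs).2
    obtain ⟨w, hw1, hw2⟩ := hball hmem
    exact ⟨w, hw1, hw2⟩
  set F : ℂ → ℂ := fun s => if hs : ∃ w, (f w - ζ = φ w ^ m ∧ w ∈ ball z₀ ε) ∧ φ w = s
    then hs.choose else 0 with hF
  have hFspec : ∀ s ∈ Troots, (f (F s) - ζ = φ (F s) ^ m ∧ F s ∈ ball z₀ ε) ∧ φ (F s) = s := by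
    intro s hs
    have hex := hsel s hs
    rw [hF]
    simp only [dif_pos hex]
    exact hex.choose_spec
  have hFinj : Set.InjOn F ↑Troots := by
    intro s hs s' hs' heq
    have h1 := (hFspec s hs).2
    have h2 := (hFspec s' hs').2
    rw [← h1, ← h2, heq]
  refine ⟨Troots.image F, ?_, ?_, ?_⟩
  · rw [Finset.card_image_of_injOn hFinj, hcardT]
  · intro w hw
    simp only [Finset.coe_image, Set.mem_image, Finset.mem_coe] at hw
    obtain ⟨s, hs, rfl⟩ := hw
    exact ((hFspec s hs).1).2
  · intro w hw
    rw [Finset.mem_image] at hw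
    obtain ⟨s, hs, rfl⟩ := hw
    have h1 := (hFspec s hs).1.1
    have h2 := (hFspec s hs).2
    rw [h2] at h1
    rw [(hrootval s hs).1] at h1
    rw [hts] at h1
    have : f (F s) = ζ + (ζ' - ζ) := by
      rw [← h1]; ring
    rw [this]; ring

lemma stG_tendsto_pt (μ : ℕ → Measure ℝ) (ν : Measure ℝ) [∀ n, IsProbabilityMeasure (μ n)]
    [IsProbabilityMeasure ν]
    (hweak : ∀ f : ℝ → ℝ, Continuous f → (∃ M : ℝ, ∀ x, |f x| ≤ M) →
      Tendsto (fun n => ∫ x, f x ∂(μ n)) atTop (nhds (∫ x, f x ∂ν)))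
    {z : ℂ} (hz : z.im ≠ 0) :
    Tendsto (fun n => ∫ x : ℝ, (z - (x:ℂ))⁻¹ ∂(μ n)) atTop
      (nhds (∫ x : ℝ, (z - (x:ℂ))⁻¹ ∂ν)) := by
  have hboundre : ∀ x : ℝ, |((z - (x:ℂ))⁻¹).re| ≤ |z.im|⁻¹ := fun x =>
    le_trans (Complex.abs_re_le_norm _) (stInt_norm_le hz x)
  have hboundim : ∀ x : ℝ, |((z - (x:ℂ))⁻¹).im| ≤ |z.im|⁻¹ := fun x =>
    le_trans (Complex.abs_im_le_norm _) (stInt_norm_le hz x)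
  have hre := hweak (fun x => ((z - (x:ℂ))⁻¹).re)
    (Complex.continuous_re.comp (stInt_continuous z hz)) ⟨|z.im|⁻¹, hboundre⟩
  have him := hweak (fun x => ((z - (x:ℂ))⁻¹).im)
    (Complex.continuous_im.comp (stInt_continuous z hz)) ⟨|z.im|⁻¹, hboundim⟩
  have hire : ∀ (σ : Measure ℝ) [IsProbabilityMeasure σ],
      ∫ x : ℝ, ((z - (x:ℂ))⁻¹).re ∂σ = (∫ x : ℝ, (z - (x:ℂ))⁻¹ ∂σ).re := by
    intro σ hσ
    have := integral_re (𝕜 := ℂ) (μ := σ) (stInt_integrable σ hz)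
    simpa using this
  have hiim : ∀ (σ : Measure ℝ) [IsProbabilityMeasure σ],
      ∫ x : ℝ, ((z - (x:ℂ))⁻¹).im ∂σ = (∫ x : ℝ, (z - (x:ℂ))⁻¹ ∂σ).im := by
    intro σ hσ
    have := integral_im (𝕜 := ℂ) (μ := σ) (stInt_integrable σ hz)
    simpa using this
  simp only [hire, hiim] at hre him
  have h1 : Tendsto (fun n => ((((∫ x : ℝ, (z - (x:ℂ))⁻¹ ∂(μ n)).re : ℝ)) : ℂ) +
      (((∫ x : ℝ, (z - (x:ℂ))⁻¹ ∂(μ n)).im : ℝ) : ℂ) * Complex.I) atTop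
      (nhds ((((∫ x : ℝ, (z - (x:ℂ))⁻¹ ∂ν).re : ℝ) : ℂ) +
        (((∫ x : ℝ, (z - (x:ℂ))⁻¹ ∂ν).im : ℝ) : ℂ) * Complex.I)) := by
    apply Tendsto.add
    · exact (Complex.continuous_ofReal.tendsto _).comp hre
    · exact Tendsto.mul_const _ ((Complex.continuous_ofReal.tendsto _).comp him)
  simpa only [Complex.re_add_im] using h1

lemma stG_lip (μ : Measure ℝ) [IsProbabilityMeasure μ] {d : ℝ} (hd : 0 < d) {z z' : ℂ}
    (hz : d ≤ |z.im|) (hz' : d ≤ |z'.im|) :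
    ‖(∫ x : ℝ, (z - (x:ℂ))⁻¹ ∂μ) - ∫ x : ℝ, (z' - (x:ℂ))⁻¹ ∂μ‖ ≤ d⁻¹ * d⁻¹ * dist z z' := by
  have hzim : z.im ≠ 0 := by intro h; rw [h] at hz; simp at hz; linarith
  have hz'im : z'.im ≠ 0 := by intro h; rw [h] at hz'; simp at hz'; linarith
  rw [← integral_sub (stInt_integrable μ hzim) (stInt_integrable μ hz'im)]
  have key : ∀ x : ℝ, ‖(z - (x:ℂ))⁻¹ - (z' - (x:ℂ))⁻¹‖ ≤ d⁻¹ * d⁻¹ * dist z z' := by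
    intro x
    have ha : z - (x:ℂ) ≠ 0 := stub_ne hzim x
    have hb : z' - (x:ℂ) ≠ 0 := stub_ne hz'im x
    have hkey : (z - (x:ℂ))⁻¹ - (z' - (x:ℂ))⁻¹ = (z' - z) * ((z - (x:ℂ))⁻¹ * (z' - (x:ℂ))⁻¹) := by
      field_simp
      ring
    rw [hkey, norm_mul, norm_mul, norm_inv, norm_inv]
    have h1 : ‖z - (x:ℂ)‖⁻¹ ≤ d⁻¹ := by
      apply inv_anti₀ hd
      calc d ≤ |z.im| := hz
        _ = |(z - (x:ℂ)).im| := by simp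
        _ ≤ ‖z - (x:ℂ)‖ := Complex.abs_im_le_norm _
    have h2 : ‖z' - (x:ℂ)‖⁻¹ ≤ d⁻¹ := by
      apply inv_anti₀ hd
      calc d ≤ |z'.im| := hz'
        _ = |(z' - (x:ℂ)).im| := by simp
        _ ≤ ‖z' - (x:ℂ)‖ := Complex.abs_im_le_norm _
    have h3 : ‖z' - z‖ = dist z z' := by rw [dist_eq_norm, norm_sub_rev]
    rw [← h3]
    calc ‖z' - z‖ * (‖z - (x:ℂ)‖⁻¹ * ‖z' - (x:ℂ)‖⁻¹) ≤ ‖z' - z‖ * (d⁻¹ * d⁻¹) := by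
          apply mul_le_mul_of_nonneg_left _ (norm_nonneg _)
          exact mul_le_mul h1 h2 (by positivity) (by positivity)
      _ = d⁻¹ * d⁻¹ * ‖z' - z‖ := by ring
  have := norm_integral_le_of_norm_le_const (μ := μ) (ae_of_all _ key)
  simpa using this

lemma stG_unif (μ : ℕ → Measure ℝ) (ν : Measure ℝ) [∀ n, IsProbabilityMeasure (μ n)]
    [IsProbabilityMeasure ν]
    (hweak : ∀ f : ℝ → ℝ, Continuous f → (∃ M : ℝ, ∀ x, |f x| ≤ M) →
      Tendsto (fun n => ∫ x, f x ∂(μ n)) atTop (nhds (∫ x, f x ∂ν)))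
    {K : Set ℂ} (hK : IsCompact K) (hKim : ∀ z ∈ K, z.im ≠ 0) {δ : ℝ} (hδ : 0 < δ) :
    ∀ᶠ n in atTop, ∀ z ∈ K,
      ‖(∫ x : ℝ, (z - (x:ℂ))⁻¹ ∂(μ n)) - ∫ x : ℝ, (z - (x:ℂ))⁻¹ ∂ν‖ < δ := by
  rcases K.eq_empty_or_nonempty with hKe | hKne
  · filter_upwards with n z hz
    rw [hKe] at hz
    exact absurd hz (Set.notMem_empty z)
  obtain ⟨z₀, hz₀K, hz₀min⟩ := hK.exists_isMinOn hKne
    (Continuous.continuousOn (by continuity : Continuous fun z : ℂ => |z.im|))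
  set d : ℝ := |z₀.im| with hd
  have hd0 : 0 < d := abs_pos.mpr (hKim z₀ hz₀K)
  have hdle : ∀ z ∈ K, d ≤ |z.im| := fun z hz => hz₀min hz
  set η : ℝ := δ / 4 * (d * d) with hη
  have hη0 : 0 < η := by positivity
  obtain ⟨t, htK, htfin, hcover⟩ := hK.finite_cover_balls hη0
  have hptw : ∀ y ∈ t, ∀ᶠ n in atTop,
      ‖(∫ x : ℝ, (y - (x:ℂ))⁻¹ ∂(μ n)) - ∫ x : ℝ, (y - (x:ℂ))⁻¹ ∂ν‖ < δ / 4 := by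
    intro y hy
    have hyim : y.im ≠ 0 := hKim y (htK hy)
    have htd := stG_tendsto_pt μ ν hweak hyim
    have hball : ball (∫ x : ℝ, (y - (x:ℂ))⁻¹ ∂ν) (δ / 4) ∈
        nhds (∫ x : ℝ, (y - (x:ℂ))⁻¹ ∂ν) := ball_mem_nhds _ (by positivity)
    filter_upwards [htd hball] with n hn
    rw [Set.mem_preimage, mem_ball, dist_eq_norm] at hn
    exact hn
  have hall := (eventually_all_finite htfin).mpr hptw
  filter_upwards [hall] with n hn z hzK
  obtain ⟨y, hyt, hzy⟩ : ∃ y ∈ t, z ∈ ball y η := by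
    have := hcover hzK
    simpa using this
  have hyK : y ∈ K := htK hyt
  have hlip1 := stG_lip (μ n) hd0 (hdle z hzK) (hdle y hyK)
  have hlip2 := stG_lip ν hd0 (hdle y hyK) (hdle z hzK)
  have hdist : dist z y < η := mem_ball.mp hzy
  have hb1 : d⁻¹ * d⁻¹ * dist z y < δ / 4 := by
    have h2 : d⁻¹ * d⁻¹ * dist z y < d⁻¹ * d⁻¹ * η := by
      apply mul_lt_mul_of_pos_left hdist (by positivity)
    have h3 : d⁻¹ * d⁻¹ * η = δ / 4 := by
      rw [hη]; field_simp
    linarith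
  have hmid := hn y hyt
  have htri : ‖(∫ x : ℝ, (z - (x:ℂ))⁻¹ ∂(μ n)) - ∫ x : ℝ, (z - (x:ℂ))⁻¹ ∂ν‖ ≤
      ‖(∫ x : ℝ, (z - (x:ℂ))⁻¹ ∂(μ n)) - ∫ x : ℝ, (y - (x:ℂ))⁻¹ ∂(μ n)‖ +
      ‖(∫ x : ℝ, (y - (x:ℂ))⁻¹ ∂(μ n)) - ∫ x : ℝ, (y - (x:ℂ))⁻¹ ∂ν‖ +
      ‖(∫ x : ℝ, (y - (x:ℂ))⁻¹ ∂ν) - ∫ x : ℝ, (z - (x:ℂ))⁻¹ ∂ν‖ := by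
    have := norm_sub_le_norm_sub_add_norm_sub
      (∫ x : ℝ, (z - (x:ℂ))⁻¹ ∂(μ n)) (∫ x : ℝ, (y - (x:ℂ))⁻¹ ∂(μ n))
      (∫ x : ℝ, (z - (x:ℂ))⁻¹ ∂ν)
    have h2 := norm_sub_le_norm_sub_add_norm_sub
      (∫ x : ℝ, (y - (x:ℂ))⁻¹ ∂(μ n)) (∫ x : ℝ, (y - (x:ℂ))⁻¹ ∂ν)
      (∫ x : ℝ, (z - (x:ℂ))⁻¹ ∂ν)
    linarith
  have hdyz : dist y z = dist z y := dist_comm y z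
  rw [hdyz] at hlip2
  linarith

lemma hurwitz_step (μ : ℕ → Measure ℝ) (ν : Measure ℝ) [∀ n, IsProbabilityMeasure (μ n)]
    [IsProbabilityMeasure ν]
    (hweak : ∀ f : ℝ → ℝ, Continuous f → (∃ M : ℝ, ∀ x, |f x| ≤ M) →
      Tendsto (fun n => ∫ x, f x ∂(μ n)) atTop (nhds (∫ x, f x ∂ν)))
    {w : ℂ} {r : ℝ} (hr : 0 < r) (him : ∀ z ∈ closedBall w r, z.im ≠ 0)
    {ζ' : ℂ} (hGw : (∫ x : ℝ, (w - (x:ℂ))⁻¹ ∂ν) = ζ')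
    (hnz : ∀ z ∈ closedBall w r, z ≠ w → (∫ x : ℝ, (z - (x:ℂ))⁻¹ ∂ν) ≠ ζ') :
    ∀ᶠ n in atTop, ∃ z ∈ ball w r, (∫ x : ℝ, (z - (x:ℂ))⁻¹ ∂(μ n)) = ζ' := by
  set G : ℂ → ℂ := fun z => ∫ x : ℝ, (z - (x:ℂ))⁻¹ ∂ν with hGdef
  have hGcont : ContinuousOn (fun z => G z - ζ') (sphere w r) := by
    intro z hz
    have : z.im ≠ 0 := him z (sphere_subset_closedBall hz)
    exact ((stG_analyticAt ν this).sub analyticAt_const).continuousAt.continuousWithinAt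
  have hsne : (sphere w r).Nonempty := NormedSpace.sphere_nonempty.mpr hr.le
  obtain ⟨zm, hzm_mem, hzm_min⟩ := (isCompact_sphere w r).exists_isMinOn hsne
    (continuous_norm.comp_continuousOn hGcont)
  set δ : ℝ := ‖G zm - ζ'‖ with hδdef
  have hδ0 : 0 < δ := by
    apply norm_pos_iff.mpr
    apply sub_ne_zero.mpr
    apply hnz zm (sphere_subset_closedBall hzm_mem)
    intro h
    rw [h] at hzm_mem
    rw [mem_sphere, dist_self] at hzm_mem
    linarith
  have hδsp : ∀ z ∈ sphere w r, δ ≤ ‖G z - ζ'‖ := fun z hz => hzm_min hz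
  have hunif := stG_unif μ ν hweak (isCompact_closedBall w r) him (by positivity : (0:ℝ) < δ/2)
  filter_upwards [hunif] with n hn
  set Gn : ℂ → ℂ := fun z => ∫ x : ℝ, (z - (x:ℂ))⁻¹ ∂(μ n) with hGndef
  by_contra hno
  push_neg at hno
  have hnz_n : ∀ z ∈ closedBall w r, Gn z - ζ' ≠ 0 := by
    intro z hz
    rcases eq_or_lt_of_le (mem_closedBall.mp hz) with hze | hzlt
    · -- z on sphere
      have hzs : z ∈ sphere w r := by rwa [mem_sphere]
      have h1 := hδsp z hzs
      have h2 := hn z hz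
      change ‖Gn z - G z‖ < δ / 2 at h2
      intro h3
      have h4 : Gn z = ζ' := by rwa [sub_eq_zero] at h3
      rw [h4] at h2
      have h5 : ‖ζ' - G z‖ = ‖G z - ζ'‖ := norm_sub_rev _ _
      rw [h5] at h2
      linarith
    · intro h3
      exact hno z (mem_ball.mpr hzlt) (by rwa [sub_eq_zero] at h3)
  have hGn_diff : DifferentiableOn ℂ Gn (closedBall w r) := by
    intro z hz
    exact (stG_analyticAt (μ n) (him z hz)).differentiableAt.differentiableWithinAt
  set F : ℂ → ℂ := fun z => (Gn z - ζ')⁻¹ with hFdef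
  have hF_diff : DiffContOnCl ℂ F (ball w r) := by
    constructor
    · apply DifferentiableOn.inv
      · exact (hGn_diff.mono ball_subset_closedBall).sub (differentiableOn_const _)
      · exact fun z hz => hnz_n z (ball_subset_closedBall hz)
    · rw [closure_ball w hr.ne']
      apply ContinuousOn.inv₀
      · exact (hGn_diff.continuousOn).sub continuousOn_const
      · exact fun z hz => hnz_n z hz
  have hfront : ∀ z ∈ frontier (ball w r), ‖F z‖ ≤ (δ/2)⁻¹ := by
    rw [frontier_ball w hr.ne']
    intro z hz
    have hzc : z ∈ closedBall w r := sphere_subset_closedBall hz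
    have h1 := hδsp z hz
    have h2 := hn z hzc
    change ‖Gn z - G z‖ < δ / 2 at h2
    have h3 : δ / 2 ≤ ‖Gn z - ζ'‖ := by
      have h4 : ‖G z - ζ'‖ ≤ ‖G z - Gn z‖ + ‖Gn z - ζ'‖ :=
        norm_sub_le_norm_sub_add_norm_sub _ _ _
      have h5 : ‖G z - Gn z‖ = ‖Gn z - G z‖ := norm_sub_rev _ _
      linarith
    rw [hFdef]
    simp only [norm_inv]
    exact inv_anti₀ (by positivity) h3
  have hmax := Complex.norm_le_of_forall_mem_frontier_norm_le isBounded_ball hF_diff hfront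
    (z := w) (by rw [closure_ball w hr.ne']; exact mem_closedBall_self hr.le)
  have hwc : w ∈ closedBall w r := mem_closedBall_self hr.le
  have hGnw : ‖Gn w - ζ'‖ < δ / 2 := by
    have h7 := hn w hwc
    change ‖Gn w - G w‖ < δ / 2 at h7
    have hGw' : G w = ζ' := hGw
    rwa [hGw'] at h7
  have hGnw0 : Gn w - ζ' ≠ 0 := hnz_n w hwc
  have h6 : (δ/2)⁻¹ < ‖F w‖ := by
    rw [hFdef]
    simp only [norm_inv]
    apply inv_strictAnti₀ (norm_pos_iff.mpr hGnw0) hGnw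
  linarith

lemma im_ge_of_close' {z₀ z : ℂ} (h : dist z z₀ ≤ |z₀.im| / 2) : |z₀.im| / 2 ≤ |z.im| := by
  have h1 : |z.im - z₀.im| ≤ dist z z₀ := by
    rw [Complex.dist_eq]
    have : z.im - z₀.im = (z - z₀).im := by simp
    rw [this]
    exact Complex.abs_im_le_norm _
  have h2 := abs_sub_abs_le_abs_sub z₀.im z.im
  have h3 : |z₀.im - z.im| = |z.im - z₀.im| := abs_sub_comm _ _
  linarith

lemma finset_sep (S : Finset ℂ) : ∃ e > 0, ∀ z ∈ S, ∀ z' ∈ S, z ≠ z' → e ≤ dist z z' := by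
  classical
  set P := (S ×ˢ S).filter (fun p : ℂ × ℂ => p.1 ≠ p.2) with hP
  rcases P.eq_empty_or_nonempty with hPe | hPne
  · refine ⟨1, one_pos, fun z hz z' hz' hne => ?_⟩
    exfalso
    have hmem : (z, z') ∈ P := by
      rw [hP, Finset.mem_filter, Finset.mem_product]; exact ⟨⟨hz, hz'⟩, hne⟩
    rw [hPe] at hmem; exact absurd hmem (Finset.notMem_empty _)
  · refine ⟨P.inf' hPne (fun p => dist p.1 p.2), ?_, ?_⟩
    · rw [gt_iff_lt, Finset.lt_inf'_iff]
      intro p hp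
      rw [hP, Finset.mem_filter] at hp
      exact dist_pos.mpr hp.2
    · intro z hz z' hz' hne
      have hmem : (z, z') ∈ P := by
        rw [hP, Finset.mem_filter, Finset.mem_product]; exact ⟨⟨hz, hz'⟩, hne⟩
      exact Finset.inf'_le (fun p => dist p.1 p.2) hmem

lemma finset_pos_min {α : Type*} (S : Finset α) (f : α → ℝ) (hf : ∀ a ∈ S, 0 < f a) :
    ∃ e > 0, ∀ a ∈ S, e ≤ f a := by
  classical
  rcases S.eq_empty_or_nonempty with hS | hS
  · exact ⟨1, one_pos, by simp [hS]⟩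
  · exact ⟨S.inf' hS f, (Finset.lt_inf'_iff hS).mpr hf, fun a ha => Finset.inf'_le f ha⟩

open scoped Classical in
/-- The multiplicity of `z` as a solution of `G z = ζ`: the order of vanishing of
`G - ζ` at `z` (as an extended natural number), `0` if `G - ζ` is not analytic there. -/
noncomputable def stieltjesSolMult (G : ℂ → ℂ) (ζ z : ℂ) : ℕ∞ :=
  if h : AnalyticAt ℂ (fun w => G w - ζ) z then analyticOrderAt (fun w => G w - ζ) z else 0

/-- if `μ_n → μ` weakly, all supported in a fixed compact set, and for
every `n` and every `ζ` the equation `G_{μ_n}(z) = ζ` has at most `N` solutions in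
`ℂ \ ℝ` counted with multiplicity, then the same bound holds for `G_μ`. -/
theorem stieltjes_inverse_bound_weak_limit
    (μ : ℕ → Measure ℝ) (ν : Measure ℝ)
    [∀ n, IsProbabilityMeasure (μ n)] [IsProbabilityMeasure ν]
    (Γ : Set ℝ) (hΓ : IsCompact Γ)
    (hsuppn : ∀ n, (μ n) Γᶜ = 0) (hsupp : ν Γᶜ = 0)
    (hweak : ∀ f : ℝ → ℝ, Continuous f → (∃ M : ℝ, ∀ x, |f x| ≤ M) →
      Tendsto (fun n => ∫ x, f x ∂(μ n)) atTop (nhds (∫ x, f x ∂ν)))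
    (N : ℕ)
    (hbound : ∀ n : ℕ, ∀ ζ : ℂ, ∀ S : Finset ℂ,
      (∀ z ∈ S, z.im ≠ 0 ∧ (∫ x : ℝ, (z - (x : ℂ))⁻¹ ∂(μ n)) = ζ) →
      ∑ z ∈ S, stieltjesSolMult (fun w => ∫ x : ℝ, (w - (x : ℂ))⁻¹ ∂(μ n)) ζ z ≤ (N : ℕ∞)) :
    ∀ ζ : ℂ, ∀ S : Finset ℂ,
      (∀ z ∈ S, z.im ≠ 0 ∧ (∫ x : ℝ, (z - (x : ℂ))⁻¹ ∂ν) = ζ) →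
      ∑ z ∈ S, stieltjesSolMult (fun w => ∫ x : ℝ, (w - (x : ℂ))⁻¹ ∂ν) ζ z ≤ (N : ℕ∞) := by
  classical
  intro ζ S hS
  have hSim : ∀ z ∈ S, z.im ≠ 0 := fun z hz => (hS z hz).1
  have han : ∀ z, z ∈ S → AnalyticAt ℂ
      (fun w => (∫ x : ℝ, (w - (x : ℂ))⁻¹ ∂ν) - ζ) z := fun z hz =>
    (stG_analyticAt ν (hSim z hz)).sub analyticAt_const
  -- each order is a finite natural number
  have hord : ∀ z, ∀ hz : z ∈ S, ∃ mz : ℕ, analyticOrderAt (fun w => (∫ x : ℝ, (w - (x : ℂ))⁻¹ ∂ν) - ζ) z = (mz : ℕ∞) := by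
    intro z hz
    have hne : analyticOrderAt (fun w => (∫ x : ℝ, (w - (x : ℂ))⁻¹ ∂ν) - ζ) z ≠ ⊤ := by
      intro htop
      exact stG_not_eventually_const ν hΓ hsupp (hSim z hz) ζ
        (analyticOrderAt_eq_top.mp htop)
    obtain ⟨mz, hmz⟩ := WithTop.ne_top_iff_exists.mp hne
    exact ⟨mz, hmz.symm⟩
  choose mfun hmfun using hord
  set m : ℂ → ℕ := fun z => if hz : z ∈ S then mfun z hz else 0 with hmdef
  have hm : ∀ z, ∀ hz : z ∈ S, analyticOrderAt (fun w => (∫ x : ℝ, (w - (x : ℂ))⁻¹ ∂ν) - ζ) z = (m z : ℕ∞) := by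
    intro z hz; rw [hmdef]; simp only [dif_pos hz]; exact hmfun z hz
  -- multiplicities in the goal
  have hmult : ∀ z ∈ S, stieltjesSolMult (fun w => ∫ x : ℝ, (w - (x : ℂ))⁻¹ ∂ν) ζ z
      = (m z : ℕ∞) := by
    intro z hz
    rw [stieltjesSolMult, dif_pos (han z hz)]
    exact hm z hz
  rw [Finset.sum_congr rfl hmult]
  -- separation and im-bounds for S
  obtain ⟨e₁, he₁, hsep⟩ := finset_sep S
  obtain ⟨e₂, he₂, him2⟩ := finset_pos_min S (fun z => |z.im|)
    (fun z hz => abs_pos.mpr (hSim z hz))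
  set ε : ℝ := min (e₁ / 3) (e₂ / 2) with hεdef
  have hε0 : 0 < ε := lt_min (by linarith) (by linarith)
  have hball_im : ∀ z ∈ S, ∀ w ∈ ball z ε, w.im ≠ 0 := by
    intro z hz w hw
    have h1 : dist w z ≤ |z.im| / 2 := by
      have h2 : ε ≤ e₂ / 2 := min_le_right _ _
      have h3 : e₂ ≤ |z.im| := him2 z hz
      have := mem_ball.mp hw
      linarith
    have := im_ge_of_close' h1
    have h4 : 0 < |z.im| := abs_pos.mpr (hSim z hz)
    intro h5; rw [h5] at this; simp at this; linarith
  have hball_disj : ∀ z ∈ S, ∀ z' ∈ S, z ≠ z' →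
      ∀ w, w ∈ ball z ε → w ∉ ball z' ε := by
    intro z hz z' hz' hne w hw hw'
    have h1 := hsep z hz z' hz' hne
    have h2 := mem_ball.mp hw
    have h3 := mem_ball.mp hw'
    have h4 : dist z z' ≤ dist w z + dist w z' := dist_triangle_left _ _ _
    have h5 : ε ≤ e₁ / 3 := min_le_left _ _
    linarith
  -- local m-to-one data
  have hloc : ∀ z, ∀ hz : z ∈ S, ∃ ρ, ρ > 0 ∧ ∀ ζ' : ℂ, ζ' ≠ ζ → dist ζ' ζ < ρ →
      ∃ T : Finset ℂ, T.card = m z ∧ (↑T : Set ℂ) ⊆ ball z ε ∧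
        ∀ w ∈ T, (∫ x : ℝ, (w - (x : ℂ))⁻¹ ∂ν) = ζ' := by
    intro z hz
    obtain ⟨ρ, hρ0, hρ⟩ := local_m_to_one (han z hz) (hm z hz) hε0
    exact ⟨ρ, hρ0, hρ⟩
  choose ρfun hρfun using hloc
  set ρt : ℂ → ℝ := fun z => if hz : z ∈ S then ρfun z hz else 1 with hρtdef
  obtain ⟨ρ, hρ0, hρle⟩ := finset_pos_min S ρt (by
    intro z hz; rw [hρtdef]; simp only [dif_pos hz]; exact (hρfun z hz).1)
  set ζ' : ℂ := ζ + ((ρ/2 : ℝ) : ℂ) with hζ'def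
  have hζ'ne : ζ' ≠ ζ := by
    rw [hζ'def]
    intro h
    have h1 : ((ρ/2 : ℝ) : ℂ) = 0 := by
      have := congrArg (fun w => w - ζ) h
      simpa using this
    rw [Complex.ofReal_eq_zero] at h1
    linarith
  have hdistval : dist ζ' ζ = ρ / 2 := by
    rw [hζ'def, Complex.dist_eq]
    have h1 : ζ + ((ρ/2 : ℝ) : ℂ) - ζ = ((ρ/2 : ℝ) : ℂ) := by ring
    rw [h1, Complex.norm_real, Real.norm_eq_abs, abs_of_nonneg (by linarith)]
  have hζ'dist : ∀ z, ∀ hz : z ∈ S, dist ζ' ζ < ρfun z hz := by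
    intro z hz
    have h1 : ρ ≤ ρt z := hρle z hz
    have h2 : ρt z = ρfun z hz := by rw [hρtdef]; simp only [dif_pos hz]
    rw [hdistval]
    linarith
  -- choose solution finsets near each z ∈ S
  have hT : ∀ z, ∀ hz : z ∈ S, ∃ T : Finset ℂ, T.card = m z ∧ (↑T : Set ℂ) ⊆ ball z ε ∧
      ∀ w ∈ T, (∫ x : ℝ, (w - (x : ℂ))⁻¹ ∂ν) = ζ' := fun z hz =>
    (hρfun z hz).2 ζ' hζ'ne (hζ'dist z hz)
  choose Tfun hTfun using hT
  set Wf : ℂ → Finset ℂ := fun z => if hz : z ∈ S then Tfun z hz else ∅ with hWfdef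
  have hWfspec : ∀ z, ∀ hz : z ∈ S, (Wf z).card = m z ∧ (↑(Wf z) : Set ℂ) ⊆ ball z ε ∧
      ∀ w ∈ Wf z, (∫ x : ℝ, (w - (x : ℂ))⁻¹ ∂ν) = ζ' := by
    intro z hz
    rw [hWfdef]; simp only [dif_pos hz]; exact hTfun z hz
  set W : Finset ℂ := S.biUnion Wf with hWdef
  have hWdisj : ∀ z ∈ S, ∀ z' ∈ S, z ≠ z' → Disjoint (Wf z) (Wf z') := by
    intro z hz z' hz' hne
    rw [Finset.disjoint_left]
    intro w hw hw'
    exact hball_disj z hz z' hz' hne w ((hWfspec z hz).2.1 hw) ((hWfspec z' hz').2.1 hw')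
  have hWcard : W.card = ∑ z ∈ S, m z := by
    rw [hWdef, Finset.card_biUnion hWdisj]
    exact Finset.sum_congr rfl (fun z hz => (hWfspec z hz).1)
  have hWprop : ∀ w ∈ W, w.im ≠ 0 ∧ (∫ x : ℝ, (w - (x : ℂ))⁻¹ ∂ν) = ζ' := by
    intro w hw
    rw [hWdef, Finset.mem_biUnion] at hw
    obtain ⟨z, hz, hwz⟩ := hw
    exact ⟨hball_im z hz w ((hWfspec z hz).2.1 hwz), (hWfspec z hz).2.2 w hwz⟩
  -- isolated zero radii around each w ∈ W
  have hiso : ∀ w, ∀ hw : w ∈ W, ∃ r1, r1 > 0 ∧ ∀ z : ℂ, dist z w < r1 → z ≠ w →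
      (∫ x : ℝ, (z - (x : ℂ))⁻¹ ∂ν) ≠ ζ' := by
    intro w hw
    have h_an : AnalyticAt ℂ (fun q => (∫ x : ℝ, (q - (x : ℂ))⁻¹ ∂ν) - ζ') w :=
      (stG_analyticAt ν (hWprop w hw).1).sub analyticAt_const
    have hnev : ¬ (∀ᶠ q in nhds w, (∫ x : ℝ, (q - (x : ℂ))⁻¹ ∂ν) - ζ' = 0) :=
      stG_not_eventually_const ν hΓ hsupp (hWprop w hw).1 ζ'
    have hpn := h_an.eventually_eq_zero_or_eventually_ne_zero.resolve_left hnev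
    rw [eventually_nhdsWithin_iff, Metric.eventually_nhds_iff] at hpn
    obtain ⟨r1, hr1, hr1spec⟩ := hpn
    refine ⟨r1, hr1, fun z hzd hzw hGz => ?_⟩
    have h2 := hr1spec hzd (Set.mem_compl_singleton_iff.mpr hzw)
    apply h2
    rw [hGz]; ring
  choose r1fun hr1fun using hiso
  -- separation and im-bounds for W
  obtain ⟨e₁', he₁', hsep'⟩ := finset_sep W
  obtain ⟨e₂', he₂', him2'⟩ := finset_pos_min W (fun w => |w.im|)
    (fun w hw => abs_pos.mpr (hWprop w hw).1)
  set rad : ℂ → ℝ := fun w => if hw : w ∈ W then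
    min (r1fun w hw / 2) (min (e₁' / 3) (e₂' / 2)) else 1 with hraddef
  have hrad0 : ∀ w, ∀ hw : w ∈ W, 0 < rad w := by
    intro w hw
    rw [hraddef]; simp only [dif_pos hw]
    have := (hr1fun w hw).1
    apply lt_min (by linarith) (lt_min (by linarith) (by linarith))
  have hradim : ∀ w, ∀ hw : w ∈ W, ∀ z ∈ closedBall w (rad w), z.im ≠ 0 := by
    intro w hw z hz
    have h1 : rad w ≤ e₂' / 2 := by
      rw [hraddef]; simp only [dif_pos hw]
      exact le_trans (min_le_right _ _) (min_le_right _ _)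
    have h2 : dist z w ≤ |w.im| / 2 := by
      have h3 := mem_closedBall.mp hz
      have h4 := him2' w hw
      linarith
    have h5 := im_ge_of_close' h2
    have h6 : 0 < |w.im| := abs_pos.mpr (hWprop w hw).1
    intro h7; rw [h7] at h5; simp at h5; linarith
  -- apply the Hurwitz step to each w ∈ W
  have hstep : ∀ w, ∀ hw : w ∈ W, ∀ᶠ n in atTop, ∃ z ∈ ball w (rad w),
      (∫ x : ℝ, (z - (x : ℂ))⁻¹ ∂(μ n)) = ζ' := by
    intro w hw
    apply hurwitz_step μ ν hweak (hrad0 w hw) (hradim w hw) (hWprop w hw).2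
    intro z hz hzw
    apply (hr1fun w hw).2 z _ hzw
    have h1 : rad w ≤ r1fun w hw / 2 := by
      rw [hraddef]; simp only [dif_pos hw]; exact min_le_left _ _
    have h2 := mem_closedBall.mp hz
    have := (hr1fun w hw).1
    linarith
  have hall : ∀ᶠ n in atTop, ∀ w ∈ (↑W : Set ℂ), ∃ z ∈ ball w (rad w),
      (∫ x : ℝ, (z - (x : ℂ))⁻¹ ∂(μ n)) = ζ' := by
    apply (eventually_all_finite W.finite_toSet).mpr
    intro w hw
    exact hstep w hw
  obtain ⟨n, hn⟩ := hall.exists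
  -- select one solution of G_n = ζ' in each ball
  set F2 : ℂ → ℂ := fun w => if h : ∃ z, z ∈ ball w (rad w) ∧
      (∫ x : ℝ, (z - (x : ℂ))⁻¹ ∂(μ n)) = ζ' then h.choose else 0 with hF2def
  have hF2spec : ∀ w ∈ W, F2 w ∈ ball w (rad w) ∧
      (∫ x : ℝ, ((F2 w) - (x : ℂ))⁻¹ ∂(μ n)) = ζ' := by
    intro w hw
    have hex : ∃ z, z ∈ ball w (rad w) ∧ (∫ x : ℝ, (z - (x : ℂ))⁻¹ ∂(μ n)) = ζ' := by
      obtain ⟨z, hz1, hz2⟩ := hn w hw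
      exact ⟨z, hz1, hz2⟩
    rw [hF2def]; simp only [dif_pos hex]
    exact hex.choose_spec
  have hF2inj : Set.InjOn F2 ↑W := by
    intro w hw w' hw' heq
    by_contra hne
    have h1 := (hF2spec w hw).1
    have h2 := (hF2spec w' hw').1
    rw [heq] at h1
    have h3 := hsep' w (Finset.mem_coe.mp hw) w' (Finset.mem_coe.mp hw') hne
    have h4 := mem_ball.mp h1
    have h5 := mem_ball.mp h2
    have h6 : dist w w' ≤ dist (F2 w') w + dist (F2 w') w' := dist_triangle_left _ _ _
    have h7 : rad w ≤ e₁' / 3 := by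
      rw [hraddef]; simp only [dif_pos (Finset.mem_coe.mp hw)]
      exact le_trans (min_le_right _ _) (min_le_left _ _)
    have h8 : rad w' ≤ e₁' / 3 := by
      rw [hraddef]; simp only [dif_pos (Finset.mem_coe.mp hw')]
      exact le_trans (min_le_right _ _) (min_le_left _ _)
    linarith
  set S' : Finset ℂ := W.image F2 with hS'def
  have hS'card : S'.card = W.card := by
    rw [hS'def, Finset.card_image_of_injOn hF2inj]
  have hS'prop : ∀ z ∈ S', z.im ≠ 0 ∧ (∫ x : ℝ, (z - (x : ℂ))⁻¹ ∂(μ n)) = ζ' := by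
    intro z hz
    rw [hS'def, Finset.mem_image] at hz
    obtain ⟨w, hw, rfl⟩ := hz
    refine ⟨?_, (hF2spec w hw).2⟩
    exact hradim w hw (F2 w) (ball_subset_closedBall (hF2spec w hw).1)
  have hb := hbound n ζ' S' hS'prop
  -- each solution contributes at least one to the multiplicity sum
  have hone : ∀ z ∈ S', (1 : ℕ∞) ≤
      stieltjesSolMult (fun w => ∫ x : ℝ, (w - (x : ℂ))⁻¹ ∂(μ n)) ζ' z := by
    intro z hz
    have h_an : AnalyticAt ℂ (fun q => (∫ x : ℝ, (q - (x : ℂ))⁻¹ ∂(μ n)) - ζ') z :=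
      (stG_analyticAt (μ n) (hS'prop z hz).1).sub analyticAt_const
    rw [stieltjesSolMult, dif_pos h_an]
    rw [ENat.one_le_iff_ne_zero]
    intro h0
    obtain ⟨g, hg_an, hg_ne, hg_eq⟩ := (h_an.analyticOrderAt_eq_natCast (n := 0)).mp (by exact_mod_cast h0)
    have h1 := hg_eq.self_of_nhds
    simp only [pow_zero, one_smul] at h1
    rw [(hS'prop z hz).2, sub_self] at h1
    exact hg_ne h1.symm
  have hcard_le : ((S'.card : ℕ) : ℕ∞) ≤
      ∑ z ∈ S', stieltjesSolMult (fun w => ∫ x : ℝ, (w - (x : ℂ))⁻¹ ∂(μ n)) ζ' z := by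
    have := Finset.card_nsmul_le_sum S'
      (fun z => stieltjesSolMult (fun w => ∫ x : ℝ, (w - (x : ℂ))⁻¹ ∂(μ n)) ζ' z) 1 hone
    simpa using this
  have hfinal : ((∑ z ∈ S, m z : ℕ) : ℕ∞) ≤ (N : ℕ∞) := by
    calc ((∑ z ∈ S, m z : ℕ) : ℕ∞) = ((W.card : ℕ) : ℕ∞) := by rw [hWcard]
      _ = ((S'.card : ℕ) : ℕ∞) := by rw [hS'card]
      _ ≤ _ := hcard_le
      _ ≤ (N : ℕ∞) := hb
  calc ∑ z ∈ S, ((m z : ℕ∞)) = ((∑ z ∈ S, m z : ℕ) : ℕ∞) := by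
        rw [Nat.cast_sum]
    _ ≤ (N : ℕ∞) := hfinal
end

section
/- Let f and g be holomorphic on an open set U containing the closed disc of radius d centered at z₀. Suppose f has a zero of order k at z₀ and no other zeros in the open disc B(z₀, d). Let ε ∈ (0,d), set b = ε/d and M = max_{|w−z₀|=d} |f(w)|. If sup_{|w−z₀|=ε} |f(w) − g(w)| < (|f^{(k)}(z₀)|/k!)·ε^k − M·b^{k+1}/(1−b), then g has exactly k zeros (counted with multiplicity) in the open disc B(z₀, ε). -/
open Metric Set

open Complex Filter Topology

noncomputable def AnalyticAt.order {f : ℂ → ℂ} {z : ℂ} (_ : AnalyticAt ℂ f z) : ℕ∞ :=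
  analyticOrderAt f z

theorem AnalyticAt.order_eq_top_iff {f : ℂ → ℂ} {z : ℂ} (hf : AnalyticAt ℂ f z) :
    hf.order = ⊤ ↔ ∀ᶠ w in 𝓝 z, f w = 0 := analyticOrderAt_eq_top

theorem AnalyticAt.order_eq_nat_iff {f : ℂ → ℂ} {z : ℂ} (hf : AnalyticAt ℂ f z) (n : ℕ) :
    hf.order = n ↔ ∃ g : ℂ → ℂ, AnalyticAt ℂ g z ∧ g z ≠ 0 ∧
      ∀ᶠ w in 𝓝 z, f w = (w - z) ^ n • g w := hf.analyticOrderAt_eq_natCast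

lemma order_factor_eq {u h : ℂ → ℂ} {z : ℂ} (hu : AnalyticAt ℂ u z) (hh : AnalyticAt ℂ h z)
    (hf : AnalyticAt ℂ (fun w => u w * h w) z) (hu0 : u z ≠ 0) :
    hf.order = hh.order := by
  by_cases htop : hh.order = ⊤
  · rw [htop, AnalyticAt.order_eq_top_iff]
    filter_upwards [hh.order_eq_top_iff.mp htop] with w hw
    simp [hw]
  · obtain ⟨n, hn⟩ := WithTop.ne_top_iff_exists.mp htop
    obtain ⟨g, hg, hg0, hgeq⟩ := (hh.order_eq_nat_iff n).mp (by exact_mod_cast hn.symm)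
    have : hf.order = (n : ℕ∞) := by
      rw [AnalyticAt.order_eq_nat_iff]
      refine ⟨fun w => u w * g w, hu.mul hg, mul_ne_zero hu0 hg0, ?_⟩
      filter_upwards [hgeq] with w hw
      simp only [smul_eq_mul] at hw ⊢
      rw [hw]; ring
    rw [this]; exact_mod_cast hn

lemma order_congr' {f g : ℂ → ℂ} {z : ℂ} (hf : AnalyticAt ℂ f z) (hg : AnalyticAt ℂ g z)
    (hfg : f =ᶠ[𝓝 z] g) : hf.order = hg.order := by
  by_cases htop : hg.order = ⊤
  · rw [htop, AnalyticAt.order_eq_top_iff]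
    filter_upwards [hg.order_eq_top_iff.mp htop, hfg] with w hw hw'
    rw [hw', hw]
  · obtain ⟨n, hn⟩ := WithTop.ne_top_iff_exists.mp htop
    obtain ⟨q, hq, hq0, hqeq⟩ := (hg.order_eq_nat_iff n).mp (by exact_mod_cast hn.symm)
    have : hf.order = (n : ℕ∞) := by
      rw [AnalyticAt.order_eq_nat_iff]
      exact ⟨q, hq, hq0, by filter_upwards [hqeq, hfg] with w hw hw'; rw [hw', hw]⟩
    rw [this]; exact_mod_cast hn

lemma global_factor {V : Set ℂ} (hV : IsOpen V) {h : ℂ → ℂ} (hd : DifferentiableOn ℂ h V)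
    {z₁ : ℂ} (hz₁ : z₁ ∈ V) {m : ℕ}
    (hm : ((hd.analyticOnNhd hV) z₁ hz₁).order = (m : ℕ∞)) :
    ∃ h₁ : ℂ → ℂ, DifferentiableOn ℂ h₁ V ∧ h₁ z₁ ≠ 0 ∧
      (∀ z ∈ V, h z = (z - z₁) ^ m * h₁ z) ∧
      (∀ z ∈ V, z ≠ z₁ → ∀ (ha : AnalyticAt ℂ h z) (ha₁ : AnalyticAt ℂ h₁ z),
        ha.order = ha₁.order) := by
  classical
  obtain ⟨p, hploc, hp0, hpeq⟩ := (((hd.analyticOnNhd hV) z₁ hz₁).order_eq_nat_iff m).mp hm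
  set h₁ : ℂ → ℂ := fun z => if z = z₁ then p z₁ else h z / (z - z₁) ^ m with hh₁
  have heq₁ : h₁ =ᶠ[𝓝 z₁] p := by
    filter_upwards [hpeq] with w hw
    by_cases hwz : w = z₁
    · simp [h₁, hwz]
    · have hne : ((w : ℂ) - z₁) ^ m ≠ 0 := pow_ne_zero _ (sub_ne_zero.mpr hwz)
      simp only [h₁, if_neg hwz, hw, smul_eq_mul]
      field_simp
  have hdiff : DifferentiableOn ℂ h₁ V := by
    intro z hz
    by_cases hzz : z = z₁
    · subst hzz
      exact (hploc.differentiableAt.congr_of_eventuallyEq heq₁).differentiableWithinAt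
    · have hev : h₁ =ᶠ[𝓝 z] fun w => h w / (w - z₁) ^ m := by
        filter_upwards [isOpen_compl_singleton.mem_nhds hzz] with w hw
        have hw' : w ≠ z₁ := hw
        simp [h₁, hw']
      have hda : DifferentiableAt ℂ (fun w => h w / (w - z₁) ^ m) z :=
        (hd.differentiableAt (hV.mem_nhds hz)).div
          (((differentiable_id.sub_const z₁).pow m).differentiableAt)
          (pow_ne_zero _ (sub_ne_zero.mpr hzz))
      exact (hda.congr_of_eventuallyEq hev).differentiableWithinAt
  have hval : ∀ z ∈ V, h z = (z - z₁) ^ m * h₁ z := by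
    intro z hz
    by_cases hzz : z = z₁
    · subst hzz
      have := hpeq.self_of_nhds
      simp only [h₁, if_pos rfl]
      simpa [smul_eq_mul] using this
    · have hne : ((z : ℂ) - z₁) ^ m ≠ 0 := pow_ne_zero _ (sub_ne_zero.mpr hzz)
      simp only [h₁, if_neg hzz]
      field_simp
  refine ⟨h₁, hdiff, by simpa [h₁] using hp0, hval, ?_⟩
  intro z hz hzz ha ha₁
  have hu : AnalyticAt ℂ (fun w => (w - z₁) ^ m) z :=
    ((analyticAt_id.sub analyticAt_const).pow m)
  have hprod : AnalyticAt ℂ (fun w => (w - z₁) ^ m * h₁ w) z := hu.mul ha₁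
  have hev : h =ᶠ[𝓝 z] fun w => (w - z₁) ^ m * h₁ w := by
    filter_upwards [hV.mem_nhds hz] with w hw using hval w hw
  rw [order_congr' ha hprod hev]
  exact order_factor_eq hu ha₁ hprod (pow_ne_zero _ (sub_ne_zero.mpr hzz))


lemma circleIntegral_add' {f g : ℂ → ℂ} {c : ℂ} {R : ℝ} (hf : CircleIntegrable f c R)
    (hg : CircleIntegrable g c R) :
    (∮ z in C(c, R), (f z + g z)) = (∮ z in C(c, R), f z) + ∮ z in C(c, R), g z := by
  simp only [circleIntegral, smul_add, intervalIntegral.integral_add hf.out hg.out]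

lemma argPrin {c : ℂ} {r : ℝ} (hr : 0 < r) {V : Set ℂ} (hV : IsOpen V)
    (hsub : closedBall c r ⊆ V) :
    ∀ (n : ℕ) (S : Finset ℂ) (h : ℂ → ℂ), S.card = n → DifferentiableOn ℂ h V →
      (∀ z ∈ sphere c r, h z ≠ 0) → ((S : Set ℂ) = {z ∈ ball c r | h z = 0}) →
      ∃ m : ℂ → ℕ, (∀ z ∈ S, ∀ (ha : AnalyticAt ℂ h z), ha.order = (m z : ℕ∞)) ∧
        (∮ z in C(c, r), deriv h z / h z) = (2 * Real.pi * I) * ∑ z ∈ S, (m z : ℂ) := by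
  intro n
  induction n with
  | zero =>
    intro S h hcard hd hsph hset
    have hS : S = ∅ := Finset.card_eq_zero.mp hcard
    subst hS
    have hne : ∀ z ∈ closedBall c r, h z ≠ 0 := by
      intro z hz h0
      rcases (mem_closedBall.mp hz).lt_or_eq with hlt | heq
      · have : z ∈ ((∅ : Finset ℂ) : Set ℂ) := by
          rw [hset]; exact ⟨mem_ball.mpr hlt, h0⟩
        simpa using this
      · exact hsph z (mem_sphere.mpr heq) h0
    have han : AnalyticOnNhd ℂ h V := hd.analyticOnNhd hV
    have hcont : ContinuousOn (fun z => deriv h z / h z) (closedBall c r) :=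
      ((han.deriv.continuousOn).mono hsub).div ((hd.continuousOn).mono hsub) hne
    have hzero := Complex.circleIntegral_eq_zero_of_differentiable_on_off_countable hr.le
      Set.countable_empty hcont (fun z hz => by
        have hzV : z ∈ V := hsub (ball_subset_closedBall hz.1)
        exact ((han.deriv z hzV).differentiableAt).div ((han z hzV).differentiableAt)
          (hne z (ball_subset_closedBall hz.1)))
    exact ⟨fun _ => 0, by simp, by simp [hzero]⟩
  | succ n ih =>
    classical
    intro S h hcard hd hsph hset
    obtain ⟨z₁, hz₁S⟩ := Finset.card_pos.mp (by omega : 0 < S.card)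
    have hz₁mem : z₁ ∈ ball c r ∧ h z₁ = 0 := by
      have : z₁ ∈ ({z ∈ ball c r | h z = 0} : Set ℂ) := by
        rw [← hset]; exact_mod_cast hz₁S
      exact this
    have hz₁V : z₁ ∈ V := hsub (ball_subset_closedBall hz₁mem.1)
    have ha₁ : AnalyticAt ℂ h z₁ := (hd.analyticOnNhd hV) z₁ hz₁V
    have hfin : ha₁.order ≠ ⊤ := by
      intro htop
      have hev := ha₁.order_eq_top_iff.mp htop
      have hfreq : ∃ᶠ z in 𝓝[≠] z₁, h z = 0 :=
        ((hev.filter_mono nhdsWithin_le_nhds).frequently)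
      have hanb : AnalyticOnNhd ℂ h (ball c r) := fun z hz =>
        (hd.analyticOnNhd hV) z (hsub (ball_subset_closedBall hz))
      have heq0 : EqOn h 0 (ball c r) :=
        hanb.eqOn_zero_of_preconnected_of_frequently_eq_zero ((convex_ball c r).isPreconnected)
          hz₁mem.1 hfreq
      have hballsub : ball c r ⊆ (S : Set ℂ) := fun z hz => by
        rw [hset]; exact ⟨hz, heq0 hz⟩
      exact (infinite_of_mem_nhds c (ball_mem_nhds c hr)) (S.finite_toSet.subset hballsub)
    obtain ⟨m₁, hm₁⟩ := WithTop.ne_top_iff_exists.mp hfin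
    have hm₁' : ha₁.order = (m₁ : ℕ∞) := by exact_mod_cast hm₁.symm
    obtain ⟨h₁, hdiff₁, hne₁, hval, hord⟩ := global_factor hV hd hz₁V hm₁'
    have hm₁pos : m₁ ≠ 0 := by
      intro h0
      have hv := hval z₁ hz₁V
      rw [h0] at hv
      simp only [pow_zero, one_mul] at hv
      exact hne₁ (hv ▸ hz₁mem.2)
    obtain ⟨m₁', rfl⟩ : ∃ m', m₁ = m' + 1 := ⟨m₁ - 1, by omega⟩
    have hsph₁ : ∀ z ∈ sphere c r, h₁ z ≠ 0 := by
      intro z hz hz0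
      exact hsph z hz (by rw [hval z (hsub (sphere_subset_closedBall hz)), hz0, mul_zero])
    have hset₁ : ((S.erase z₁ : Finset ℂ) : Set ℂ) = {z ∈ ball c r | h₁ z = 0} := by
      ext z
      simp only [Finset.coe_erase, mem_diff, Finset.mem_coe, mem_singleton_iff, mem_setOf_eq,
        hset]
      constructor
      · rintro ⟨⟨hzb, hz0⟩, hzz⟩
        refine ⟨hzb, ?_⟩
        have hzV : z ∈ V := hsub (ball_subset_closedBall hzb)
        have := hval z hzV
        rw [hz0] at this
        exact (mul_eq_zero.mp this.symm).resolve_left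
          (pow_ne_zero _ (sub_ne_zero.mpr hzz))
      · rintro ⟨hzb, hz0⟩
        have hzz : z ≠ z₁ := fun e => hne₁ (e ▸ hz0)
        have hzV : z ∈ V := hsub (ball_subset_closedBall hzb)
        exact ⟨⟨hzb, by rw [hval z hzV, hz0, mul_zero]⟩, hzz⟩
    have hcard₁ : (S.erase z₁).card = n := by
      rw [Finset.card_erase_of_mem hz₁S, hcard]; omega
    obtain ⟨m, hmord, hmint⟩ := ih (S.erase z₁) h₁ hcard₁ hdiff₁ hsph₁ hset₁
    refine ⟨Function.update m z₁ (m₁' + 1), ?_, ?_⟩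
    · intro z hzS ha
      by_cases hzz : z = z₁
      · subst hzz; rw [Function.update_self]; exact hm₁'
      · rw [Function.update_of_ne hzz]
        have hzb : z ∈ ball c r := by
          have : z ∈ ({z ∈ ball c r | h z = 0} : Set ℂ) := by
            rw [← hset]; exact_mod_cast hzS
          exact this.1
        have hzV : z ∈ V := hsub (ball_subset_closedBall hzb)
        have ha₁z : AnalyticAt ℂ h₁ z := (hdiff₁.analyticOnNhd hV) z hzV
        rw [hord z hzV hzz ha ha₁z]
        exact hmord z (Finset.mem_erase.mpr ⟨hzz, hzS⟩) ha₁z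
    · have hz₁ball : z₁ ∈ ball c r := hz₁mem.1
      have hsphne : ∀ z ∈ sphere c r, z ≠ z₁ := by
        intro z hz e
        have h1 : dist z c = r := mem_sphere.mp hz
        have h2 := mem_ball.mp hz₁ball
        rw [← e, h1] at h2
        exact lt_irrefl r h2
      have hEq : EqOn (fun z => deriv h z / h z)
          (fun z => ((m₁' + 1 : ℕ) : ℂ) * (z - z₁)⁻¹ + deriv h₁ z / h₁ z) (sphere c r) := by
        intro z hz
        have hzV : z ∈ V := hsub (sphere_subset_closedBall hz)
        have hzz : z ≠ z₁ := hsphne z hz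
        have hsub0 : z - z₁ ≠ 0 := sub_ne_zero.mpr hzz
        have hz0 : h₁ z ≠ 0 := hsph₁ z hz
        have hd₁z : DifferentiableAt ℂ h₁ z := hdiff₁.differentiableAt (hV.mem_nhds hzV)
        have h1 : HasDerivAt (fun w => (w - z₁) ^ (m₁' + 1))
            (((m₁' + 1 : ℕ) : ℂ) * (z - z₁) ^ m₁') z := by
          simpa using (((hasDerivAt_id z).sub_const z₁).fun_pow (m₁' + 1))
        have hder : HasDerivAt h
            (((m₁' + 1 : ℕ) : ℂ) * (z - z₁) ^ m₁' * h₁ z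
              + (z - z₁) ^ (m₁' + 1) * deriv h₁ z) z := by
          refine (h1.mul hd₁z.hasDerivAt).congr_of_eventuallyEq ?_
          filter_upwards [hV.mem_nhds hzV] with w hw using hval w hw
        simp only
        rw [hder.deriv, hval z hzV]
        field_simp
        ring
      rw [circleIntegral.integral_congr hr.le hEq]
      have hi1 : CircleIntegrable (fun z => ((m₁' + 1 : ℕ) : ℂ) * (z - z₁)⁻¹) c r := by
        apply ContinuousOn.circleIntegrable hr.le
        apply continuousOn_const.mul
        exact ContinuousOn.inv₀ ((continuous_id.sub continuous_const).continuousOn)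
          (fun z hz => sub_ne_zero.mpr (hsphne z hz))
      have hi2 : CircleIntegrable (fun z => deriv h₁ z / h₁ z) c r := by
        apply ContinuousOn.circleIntegrable hr.le
        have han₁ : AnalyticOnNhd ℂ h₁ V := hdiff₁.analyticOnNhd hV
        exact ((han₁.deriv.continuousOn).mono
          (sphere_subset_closedBall.trans hsub)).div
          ((hdiff₁.continuousOn).mono (sphere_subset_closedBall.trans hsub)) hsph₁
      have hsum : ∑ z ∈ S, ((Function.update m z₁ (m₁' + 1) z : ℕ) : ℂ)
          = ((m₁' + 1 : ℕ) : ℂ) + ∑ z ∈ S.erase z₁, ((m z : ℕ) : ℂ) := by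
        rw [← Nat.cast_sum, Finset.sum_update_of_mem hz₁S, Finset.sdiff_singleton_eq_erase,
          Nat.cast_add, Nat.cast_sum]
      rw [circleIntegral_add' hi1 hi2, hmint,
        circleIntegral.integral_const_mul,
        circleIntegral.integral_sub_inv_of_mem_ball hz₁ball, hsum]
      ring

lemma coeff_factorial {f : ℂ → ℂ} {z₀ : ℂ} {p : FormalMultilinearSeries ℂ ℂ ℂ}
    (hp : HasFPowerSeriesAt f p z₀) (n : ℕ) :
    (n.factorial : ℂ) * p.coeff n = iteratedDeriv n f z₀ := by
  obtain ⟨r, hr⟩ := hp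
  have h := hr.factorial_smul (1 : ℂ) n
  rw [iteratedDeriv_eq_iteratedFDeriv, ← h, nsmul_eq_mul]
  rfl

lemma order_eq_of_iteratedDeriv {f : ℂ → ℂ} {z₀ : ℂ} (hf : AnalyticAt ℂ f z₀) {k : ℕ}
    (h0 : ∀ i < k, iteratedDeriv i f z₀ = 0) (hk : iteratedDeriv k f z₀ ≠ 0) :
    hf.order = (k : ℕ∞) := by
  obtain ⟨p, hp⟩ := id hf
  have hck : p.coeff k ≠ 0 := by
    intro hc
    apply hk
    rw [← coeff_factorial hp k, hc, mul_zero]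
  have hclt : ∀ i < k, p.coeff i = 0 := by
    intro i hi
    have h := coeff_factorial hp i
    rw [h0 i hi] at h
    exact (mul_eq_zero.mp h).resolve_left (by exact_mod_cast Nat.factorial_ne_zero i)
  have hpk : p k ≠ 0 := fun h => hck (by rw [FormalMultilinearSeries.coeff_eq_zero.mpr h])
  have hpne : p ≠ 0 := fun h => hpk (by rw [h]; rfl)
  have horder : p.order = k := by
    apply le_antisymm
    · exact Nat.sInf_le hpk
    · refine le_csInf ⟨k, hpk⟩ ?_
      intro m hm
      by_contra hlt
      push_neg at hlt
      exact hm (FormalMultilinearSeries.coeff_eq_zero.mp (hclt m hlt))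
  have : hf.order = (p.order : ℕ∞) := by
    rw [AnalyticAt.order_eq_nat_iff]
    exact ⟨_, ⟨_, hp.has_fpower_series_iterate_dslope_fslope p.order⟩,
      hp.iterate_dslope_fslope_ne_zero hpne, Eventually.of_forall hp.eq_pow_order_mul_iterate_dslope⟩
  rw [this, horder]

lemma lower_bound {f : ℂ → ℂ} {z₀ : ℂ} {d : ℝ} (hd : 0 < d)
    (hfd : DifferentiableOn ℂ f (closedBall z₀ d)) {k : ℕ}
    (hzero : ∀ i < k, iteratedDeriv i f z₀ = 0)
    {ε : ℝ} (hε : 0 < ε) (hεd : ε < d)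
    {M : ℝ} (hM : ∀ w ∈ sphere z₀ d, ‖f w‖ ≤ M) :
    ∀ w ∈ sphere z₀ ε,
      ‖iteratedDeriv k f z₀‖ / (Nat.factorial k) * ε ^ k
        - M * (ε / d) ^ (k + 1) / (1 - ε / d) ≤ ‖f w‖ := by
  have hM0 : 0 ≤ M := by
    refine le_trans (norm_nonneg (f (z₀ + d))) (hM _ ?_)
    simp [Complex.dist_eq, _root_.abs_of_nonneg hd.le]
  obtain ⟨R, hR⟩ : ∃ R : NNReal, (R : ℝ) = d := ⟨⟨d, hd.le⟩, rfl⟩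
  have hps : HasFPowerSeriesOnBall f (cauchyPowerSeries f z₀ d) z₀ R := by
    have hfd' : DifferentiableOn ℂ f (closedBall z₀ (R : ℝ)) := by rw [hR]; exact hfd
    have h := hfd'.hasFPowerSeriesOnBall (R := R)
      (by rw [← NNReal.coe_pos, hR]; exact hd)
    rwa [hR] at h
  set p := cauchyPowerSeries f z₀ d with hpdef
  have hcoeff := coeff_factorial hps.hasFPowerSeriesAt
  have hbound : ∀ n, ‖p.coeff n‖ ≤ M / d ^ n := by
    intro n
    have h1 : ‖p.coeff n‖ ≤ ‖p n‖ := by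
      have h := (p n).le_opNorm (fun _ => (1 : ℂ))
      simp only [norm_one, Finset.prod_const, one_pow, mul_one] at h
      exact h
    have h2 := norm_cauchyPowerSeries_le f z₀ d n
    have hcont : Continuous fun θ : ℝ => ‖f (circleMap z₀ d θ)‖ := by
      refine Continuous.norm ?_
      exact (hfd.continuousOn).comp_continuous (continuous_circleMap z₀ d)
        (fun θ => sphere_subset_closedBall (circleMap_mem_sphere z₀ hd.le θ))
    have h3 : (∫ θ : ℝ in (0)..2 * Real.pi, ‖f (circleMap z₀ d θ)‖) ≤ 2 * Real.pi * M := by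
      have := intervalIntegral.integral_mono_on (μ := MeasureTheory.volume) Real.two_pi_pos.le
        (hcont.intervalIntegrable _ _) (intervalIntegrable_const (c := M))
        (fun θ _ => by
          exact hM _ (circleMap_mem_sphere z₀ hd.le θ))
      simpa using this
    calc ‖p.coeff n‖ = ‖p.coeff n‖ := rfl
      _ ≤ ‖p n‖ := h1
      _ ≤ ((2 * Real.pi)⁻¹ * ∫ θ : ℝ in (0)..2 * Real.pi, ‖f (circleMap z₀ d θ)‖) * |d|⁻¹ ^ n :=
        h2
      _ ≤ ((2 * Real.pi)⁻¹ * (2 * Real.pi * M)) * |d|⁻¹ ^ n := by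
        apply mul_le_mul_of_nonneg_right
        · exact mul_le_mul_of_nonneg_left h3 (by positivity)
        · positivity
      _ = M / d ^ n := by
        rw [abs_of_pos hd]
        rw [inv_mul_cancel_left₀ (by positivity : (2 * Real.pi) ≠ 0)]
        rw [inv_pow, div_eq_mul_inv]
  intro w hw
  set y := w - z₀ with hydef
  have hy : ‖y‖ = ε := by
    rw [hydef, ← Complex.dist_eq]
    exact mem_sphere.mp hw
  have hyball : y ∈ Metric.eball (0 : ℂ) (R : ENNReal) := by
    rw [Metric.mem_eball, edist_zero_right]
    have hlt : ‖y‖₊ < R := by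
      rw [← NNReal.coe_lt_coe, hR]
      simp only [coe_nnnorm, hy]
      exact hεd
    exact_mod_cast hlt
  have hsum : HasSum (fun n => p.coeff n * y ^ n) (f w) := by
    have h := hps.hasSum hyball
    have hzw : z₀ + y = w := by rw [hydef]; ring
    rw [hzw] at h
    refine h.congr_fun ?_
    intro n
    rw [FormalMultilinearSeries.apply_eq_pow_smul_coeff, smul_eq_mul]
    ring
  set c : ℕ → ℂ := fun n => p.coeff n * y ^ n with hcdef
  have hczero : ∀ i < k, c i = 0 := by
    intro i hi
    have h := hcoeff i
    rw [hzero i hi] at h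
    have hpc : p.coeff i = 0 :=
      (mul_eq_zero.mp h).resolve_left (by exact_mod_cast Nat.factorial_ne_zero i)
    show p.coeff i * y ^ i = 0
    rw [hpc, zero_mul]
  have hck : ‖c k‖ =
      ‖iteratedDeriv k f z₀‖ / (Nat.factorial k) * ε ^ k := by
    have h : p.coeff k = iteratedDeriv k f z₀ / (Nat.factorial k : ℂ) := by
      rw [eq_div_iff (by exact_mod_cast Nat.factorial_ne_zero k), ← hcoeff k]
      ring
    show ‖p.coeff k * y ^ k‖ =
      ‖iteratedDeriv k f z₀‖ / (Nat.factorial k) * ε ^ k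
    rw [norm_mul, norm_pow, hy, h, norm_div]
    norm_num [Complex.norm_natCast]
  have htail : HasSum (fun n => c (n + (k + 1))) (f w - c k) := by
    have h1 := (hasSum_nat_add_iff' (k + 1)).mpr hsum
    have h2 : ∑ i ∈ Finset.range (k + 1), c i = c k := by
      rw [Finset.sum_range_succ,
        Finset.sum_eq_zero (fun i hi => hczero i (Finset.mem_range.mp hi)), zero_add]
    rwa [h2] at h1
  have hb01 : 0 ≤ ε / d := by positivity
  have hb1 : ε / d < 1 := by rw [div_lt_one hd]; exact hεd
  have hgeo : HasSum (fun n : ℕ => M * (ε / d) ^ (k + 1) * (ε / d) ^ n)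
      (M * (ε / d) ^ (k + 1) * (1 - ε / d)⁻¹) :=
    (hasSum_geometric_of_lt_one hb01 hb1).mul_left _
  have hbnd : ∀ n, ‖c (n + (k + 1))‖ ≤ M * (ε / d) ^ (k + 1) * (ε / d) ^ n := by
    intro n
    have h1 : ‖c (n + (k + 1))‖ = ‖p.coeff (n + (k + 1))‖ * ε ^ (n + (k + 1)) := by
      simp [hcdef, norm_mul, norm_pow, hy]
    rw [h1]
    calc ‖p.coeff (n + (k + 1))‖ * ε ^ (n + (k + 1))
        ≤ M / d ^ (n + (k + 1)) * ε ^ (n + (k + 1)) := by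
          apply mul_le_mul_of_nonneg_right (hbound _) (by positivity)
      _ = M * (ε / d) ^ (n + (k + 1)) := by
          rw [div_pow]; ring
      _ = M * (ε / d) ^ (k + 1) * (ε / d) ^ n := by
          rw [pow_add]; ring
  have hT : ‖f w - c k‖ ≤ M * (ε / d) ^ (k + 1) * (1 - ε / d)⁻¹ := by
    have h := tsum_of_norm_bounded hgeo hbnd
    rwa [htail.tsum_eq] at h
  have h1 : ‖c k‖ - ‖f w‖ ≤ ‖f w - c k‖ := by
    rw [norm_sub_rev]
    show ‖c k‖ - ‖f w‖ ≤ ‖c k - f w‖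
    exact norm_sub_norm_le (c k) (f w)
  rw [← hck, div_eq_mul_inv]
  linarith

open scoped Classical in
/-- The order of vanishing of `g` at `z` (as an extended natural number),
`0` if `g` is not analytic there. -/
noncomputable def zeroOrderAt (g : ℂ → ℂ) (z : ℂ) : ℕ∞ :=
  if _h : AnalyticAt ℂ g z then analyticOrderAt g z else 0

/-- quantitative Rouché-type theorem. If `f` has a zero of order `k`
at `z₀` and no other zeros in `B(z₀,d)`, and `g` is uniformly close enough to `f`
on the circle `|w - z₀| = ε`, then `g` has exactly `k` zeros (with multiplicity)
in `B(z₀,ε)`. -/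
theorem rouche_quantitative
    (U : Set ℂ) (hU : IsOpen U) (f g : ℂ → ℂ)
    (hf : DifferentiableOn ℂ f U) (hg : DifferentiableOn ℂ g U)
    (z₀ : ℂ) (d : ℝ) (hd : 0 < d) (hball : closedBall z₀ d ⊆ U)
    (k : ℕ)
    (hzero : ∀ i < k, iteratedDeriv i f z₀ = 0)
    (hknz : iteratedDeriv k f z₀ ≠ 0)
    (hnozero : ∀ z ∈ ball z₀ d, z ≠ z₀ → f z ≠ 0)
    (ε : ℝ) (hε : 0 < ε) (hεd : ε < d)
    (M : ℝ) (hM : ∀ w ∈ sphere z₀ d, ‖f w‖ ≤ M)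
    (hclose : ∀ w ∈ sphere z₀ ε, ‖f w - g w‖ <
      ‖iteratedDeriv k f z₀‖ / (Nat.factorial k) * ε ^ k
        - M * (ε / d) ^ (k + 1) / (1 - ε / d)) :
    ∃ S : Finset ℂ, (↑S = {z ∈ ball z₀ ε | g z = 0}) ∧
      ∑ z ∈ S, zeroOrderAt g z = (k : ℕ∞) := by
  classical
  have hfd : DifferentiableOn ℂ f (closedBall z₀ d) := hf.mono hball
  have hlow := lower_bound hd hfd hzero hε hεd hM
  have habs : ∀ w ∈ sphere z₀ ε, ‖f w - g w‖ < ‖f w‖ :=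
    fun w hw => lt_of_lt_of_le (hclose w hw) (hlow w hw)
  have hfne : ∀ w ∈ sphere z₀ ε, f w ≠ 0 := by
    intro w hw h0
    have h := habs w hw
    rw [h0] at h
    simp only [norm_zero] at h
    exact absurd h (not_lt.mpr (norm_nonneg _))
  have hgne : ∀ w ∈ sphere z₀ ε, g w ≠ 0 := by
    intro w hw h0
    have h := habs w hw
    rw [h0, sub_zero] at h
    exact lt_irrefl _ h
  set V := ball z₀ d with hVdef
  have hVopen : IsOpen V := isOpen_ball
  have hVsub : closedBall z₀ ε ⊆ V := closedBall_subset_ball hεd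
  have hVU : V ⊆ U := (ball_subset_closedBall).trans hball
  have hfV : DifferentiableOn ℂ f V := hf.mono hVU
  have hgV : DifferentiableOn ℂ g V := hg.mono hVU
  have hsphsub : sphere z₀ ε ⊆ V := sphere_subset_closedBall.trans hVsub
  have hεball : ball z₀ ε ⊆ V := ball_subset_ball hεd.le
  have hz₀V : z₀ ∈ V := mem_ball_self hd
  have hfanal : AnalyticOnNhd ℂ f V := hfV.analyticOnNhd hVopen
  have hganal : AnalyticOnNhd ℂ g V := hgV.analyticOnNhd hVopen
  -- f's zero set in the small ball
  set Sf : Finset ℂ := if k = 0 then ∅ else {z₀} with hSfdef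
  have hSfset : ((Sf : Finset ℂ) : Set ℂ) = {z ∈ ball z₀ ε | f z = 0} := by
    by_cases hk0 : k = 0
    · have hfz₀ : f z₀ ≠ 0 := by
        have := hknz; rw [hk0, iteratedDeriv_zero] at this; exact this
      simp only [hSfdef, if_pos hk0, Finset.coe_empty]
      symm
      rw [eq_empty_iff_forall_notMem]
      rintro z ⟨hzb, hz0⟩
      by_cases hzz : z = z₀
      · exact hfz₀ (hzz ▸ hz0)
      · exact hnozero z (hεball hzb) hzz hz0
    · have hfz₀ : f z₀ = 0 := by
        have := hzero 0 (Nat.pos_of_ne_zero hk0)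
        rwa [iteratedDeriv_zero] at this
      simp only [hSfdef, if_neg hk0, Finset.coe_singleton]
      ext z
      simp only [mem_singleton_iff, mem_setOf_eq]
      constructor
      · rintro rfl; exact ⟨mem_ball_self hε, hfz₀⟩
      · rintro ⟨hzb, hz0⟩
        by_contra hzz
        exact hnozero z (hεball hzb) hzz hz0
  obtain ⟨mf, hmford, hmfint⟩ :=
    argPrin hε hVopen hVsub Sf.card Sf f rfl hfV hfne hSfset
  have hfsum : ∑ z ∈ Sf, (mf z : ℂ) = (k : ℂ) := by
    by_cases hk0 : k = 0
    · simp [hSfdef, hk0]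
    · have hz₀Sf : z₀ ∈ Sf := by simp [hSfdef, hk0]
      have haf : AnalyticAt ℂ f z₀ := hfanal z₀ hz₀V
      have h1 := hmford z₀ hz₀Sf haf
      have h2 := order_eq_of_iteratedDeriv haf hzero hknz
      rw [h1] at h2
      have h3 : mf z₀ = k := by exact_mod_cast h2
      simp [hSfdef, if_neg hk0, h3]
  rw [hfsum] at hmfint
  -- g's zero set is finite
  have hfin : ({z ∈ ball z₀ ε | g z = 0} : Set ℂ).Finite := by
    by_contra hinf
    have hinf' : ({z ∈ ball z₀ ε | g z = 0} : Set ℂ).Infinite := hinf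
    obtain ⟨zs, hzsK, hacc⟩ := hinf'.exists_accPt_of_subset_isCompact
      (isCompact_closedBall z₀ ε)
      (fun z hz => ball_subset_closedBall (mem_setOf_eq ▸ hz.1))
    have hzsV : zs ∈ V := hVsub hzsK
    have hfreq : ∃ᶠ y in 𝓝[≠] zs, g y = 0 := by
      rw [frequently_nhdsWithin_iff]
      exact (accPt_iff_frequently.mp hacc).mono (fun y hy => ⟨hy.2.2, hy.1⟩)
    have hgb : AnalyticOnNhd ℂ g (ball z₀ d) := fun z hz => hganal z hz
    have hEq : EqOn g 0 (ball z₀ d) :=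
      hgb.eqOn_zero_of_preconnected_of_frequently_eq_zero
        (convex_ball z₀ d).isPreconnected hzsV hfreq
    have hw : (z₀ + ε : ℂ) ∈ sphere z₀ ε := by
      simp [Complex.dist_eq, _root_.abs_of_nonneg hε.le]
    exact hgne _ hw (hEq (hsphsub hw))
  set Sg : Finset ℂ := hfin.toFinset with hSgdef
  have hSgset : ((Sg : Finset ℂ) : Set ℂ) = {z ∈ ball z₀ ε | g z = 0} := hfin.coe_toFinset
  obtain ⟨mg, hmgord, hmgint⟩ :=
    argPrin hε hVopen hVsub Sg.card Sg g rfl hgV hgne hSgset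
  -- Rouché: equality of the two integrals
  have hFzero : (∮ z in C(z₀, ε), (deriv g z / g z - deriv f z / f z)) = 0 := by
    apply circleIntegral.integral_eq_zero_of_hasDerivWithinAt hε.le
    intro z hz
    have hzV : z ∈ V := hsphsub hz
    have hfz : f z ≠ 0 := hfne z hz
    have hgz : g z ≠ 0 := hgne z hz
    have hdf : HasDerivAt f (deriv f z) z :=
      (hfV.differentiableAt (hVopen.mem_nhds hzV)).hasDerivAt
    have hdg : HasDerivAt g (deriv g z) z :=
      (hgV.differentiableAt (hVopen.mem_nhds hzV)).hasDerivAt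
    have hq : HasDerivAt (fun w => g w / f w)
        ((deriv g z * f z - g z * deriv f z) / f z ^ 2) z := hdg.div hdf hfz
    have h1 : ‖g z / f z - 1‖ < 1 := by
      rw [div_sub_one hfz, norm_div]
      rw [div_lt_one (norm_pos_iff.mpr hfz)]
      calc ‖g z - f z‖ = ‖f z - g z‖ := by
            rw [norm_sub_rev]
        _ < ‖f z‖ := habs z hz
    have hslit : g z / f z ∈ Complex.slitPlane := by
      rw [Complex.mem_slitPlane_iff]
      left
      have h3 : |(g z / f z - 1).re| ≤ ‖g z / f z - 1‖ :=
        Complex.abs_re_le_norm _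
      have h4 : (g z / f z).re = 1 + (g z / f z - 1).re := by
        simp [Complex.sub_re]
      rw [h4]
      have h5 : -|(g z / f z - 1).re| ≤ (g z / f z - 1).re := neg_abs_le _
      linarith
    have hlog : HasDerivAt (fun w => Complex.log (g w / f w))
        ((g z / f z)⁻¹ * ((deriv g z * f z - g z * deriv f z) / f z ^ 2)) z :=
      (Complex.hasDerivAt_log hslit).comp (h := fun w => g w / f w) z hq
    have heq : (g z / f z)⁻¹ * ((deriv g z * f z - g z * deriv f z) / f z ^ 2)
        = deriv g z / g z - deriv f z / f z := by
      field_simp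
    rw [heq] at hlog
    exact hlog.hasDerivWithinAt
  have hint_f : CircleIntegrable (fun z => deriv f z / f z) z₀ ε :=
    ContinuousOn.circleIntegrable hε.le
      (((hfanal.deriv.continuousOn).mono hsphsub).div
        ((hfV.continuousOn).mono hsphsub) hfne)
  have hint_g : CircleIntegrable (fun z => deriv g z / g z) z₀ ε :=
    ContinuousOn.circleIntegrable hε.le
      (((hganal.deriv.continuousOn).mono hsphsub).div
        ((hgV.continuousOn).mono hsphsub) hgne)
  have hsub' := circleIntegral.integral_sub hint_g hint_f
  rw [hFzero] at hsub'
  have hintEq : (∮ z in C(z₀, ε), deriv g z / g z) = (∮ z in C(z₀, ε), deriv f z / f z) :=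
    sub_eq_zero.mp hsub'.symm
  rw [hmgint, hmfint] at hintEq
  have h2pi : (2 * Real.pi * I : ℂ) ≠ 0 := by
    apply mul_ne_zero (mul_ne_zero two_ne_zero _) Complex.I_ne_zero
    exact_mod_cast Real.pi_ne_zero
  have hsumc : ∑ z ∈ Sg, (mg z : ℂ) = (k : ℂ) := mul_left_cancel₀ h2pi hintEq
  have hsumn : ∑ z ∈ Sg, mg z = k := by
    rw [← Nat.cast_sum] at hsumc
    exact_mod_cast hsumc
  refine ⟨Sg, hSgset, ?_⟩
  have horder : ∀ z ∈ Sg, zeroOrderAt g z = (mg z : ℕ∞) := by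
    intro z hzS
    have hzmem : z ∈ ball z₀ ε ∧ g z = 0 := by
      have : z ∈ ({z ∈ ball z₀ ε | g z = 0} : Set ℂ) := by
        rw [← hSgset]; exact_mod_cast hzS
      exact this
    have ha : AnalyticAt ℂ g z := hganal z (hεball hzmem.1)
    rw [zeroOrderAt, dif_pos ha]
    exact hmgord z hzS ha
  rw [Finset.sum_congr rfl horder, ← Nat.cast_sum, hsumn]
end

section
/- Let f be holomorphic on the closed disc |z−z₀| ≤ d with a zero of order k at z₀, and suppose |f(z)| ≤ M on |z−z₀| = d. Then for every z with |z − z₀| = ε < d, |f(z)| ≥ (|f^{(k)}(z₀)|/k!)·ε^k − M·(ε/d)^{k+1}/(1 − ε/d). -/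
open Metric Set

/-- lower bound for `|f|` on a circle around a zero of order `k`.
If `f` is holomorphic on the closed disc `|z - z₀| ≤ d`, has a zero of order `k`
at `z₀`, and `|f| ≤ M` on the boundary circle, then on the circle of radius
`ε < d` one has `|f(z)| ≥ (|f^{(k)}(z₀)|/k!) ε^k − M (ε/d)^{k+1}/(1 − ε/d)`. -/
theorem lower_bound_near_zero_of_order
    (f : ℂ → ℂ) (z₀ : ℂ) (d : ℝ) (hd : 0 < d)
    (hf : DifferentiableOn ℂ f (closedBall z₀ d))
    (k : ℕ)
    (hzero : ∀ i < k, iteratedDeriv i f z₀ = 0)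
    (hknz : iteratedDeriv k f z₀ ≠ 0)
    (M : ℝ) (hM : ∀ w ∈ sphere z₀ d, ‖f w‖ ≤ M)
    (ε : ℝ) (hε : 0 < ε) (hεd : ε < d) :
    ∀ z ∈ sphere z₀ ε,
      ‖iteratedDeriv k f z₀‖ / (Nat.factorial k) * ε ^ k
        - M * (ε / d) ^ (k + 1) / (1 - ε / d) ≤ ‖f z‖ := by
  intro z hz
  set r : ℝ := ε / d with hrdef
  have hr0 : 0 ≤ r := by positivity
  have hr1 : r < 1 := (div_lt_one hd).2 hεd
  have hM0 : 0 ≤ M := by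
    refine le_trans (norm_nonneg _) (hM (z₀ + d) ?_)
    simp [Complex.dist_eq, Complex.norm_real, abs_of_pos hd]
  -- power series from Cauchy theory
  set R : NNReal := ⟨d, hd.le⟩ with hRdef
  have hRd : (R : ℝ) = d := rfl
  have hp : HasFPowerSeriesOnBall f (cauchyPowerSeries f z₀ R) z₀ R :=
    DifferentiableOn.hasFPowerSeriesOnBall (by rw [hRd]; exact hf)
      (by exact_mod_cast hd)
  -- Cauchy estimates for iterated derivatives
  have hcoef : ∀ n : ℕ, ‖iteratedDeriv n f z₀‖ ≤ n.factorial * M / d ^ n := by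
    intro n
    have h1 : iteratedDeriv n f z₀
        = (n.factorial : ℕ) • (cauchyPowerSeries f z₀ R n fun _ => (1 : ℂ)) := by
      rw [hp.factorial_smul (1 : ℂ) n, iteratedDeriv_eq_iteratedFDeriv]
    have hint : (∫ θ in (0:ℝ)..2 * Real.pi, ‖f (circleMap z₀ d θ)‖)
        ≤ 2 * Real.pi * M := by
      have hcont : ContinuousOn (fun θ : ℝ => ‖f (circleMap z₀ d θ)‖)
          (Set.uIcc 0 (2 * Real.pi)) := by
        apply ContinuousOn.norm
        exact hf.continuousOn.comp ((continuous_circleMap z₀ d).continuousOn)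
          (fun θ _ => sphere_subset_closedBall (circleMap_mem_sphere z₀ hd.le θ))
      have := intervalIntegral.integral_mono_on (a := (0:ℝ)) (b := 2 * Real.pi)
        (μ := MeasureTheory.volume)
        Real.two_pi_pos.le (hcont.intervalIntegrable) (intervalIntegrable_const (c := M))
        (fun θ _ => hM _ (circleMap_mem_sphere z₀ hd.le θ))
      simpa [mul_comm] using this
    have h2 : ‖cauchyPowerSeries f z₀ R n‖ ≤ M / d ^ n := by
      refine le_trans (norm_cauchyPowerSeries_le f z₀ R n) ?_
      rw [hRd, abs_of_pos hd]
      rw [div_eq_mul_inv, ← inv_pow]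
      gcongr
      calc (2 * Real.pi)⁻¹ * ∫ θ in (0:ℝ)..2 * Real.pi, ‖f (circleMap z₀ d θ)‖
          ≤ (2 * Real.pi)⁻¹ * (2 * Real.pi * M) := by
            gcongr
        _ = M := by field_simp
    have h3 : ‖cauchyPowerSeries f z₀ R n fun _ => (1:ℂ)‖
        ≤ ‖cauchyPowerSeries f z₀ R n‖ := by
      refine le_trans ((cauchyPowerSeries f z₀ R n).le_opNorm _) ?_
      simp
    calc ‖iteratedDeriv n f z₀‖
        = n.factorial * ‖cauchyPowerSeries f z₀ R n fun _ => (1:ℂ)‖ := by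
          rw [h1, ← Nat.cast_smul_eq_nsmul ℝ, norm_smul]; simp
      _ ≤ n.factorial * (M / d ^ n) := by
          refine mul_le_mul_of_nonneg_left (h3.trans h2) (by positivity)
      _ = n.factorial * M / d ^ n := by ring
  -- Taylor series at z
  have hzball : z ∈ ball z₀ d := by
    rw [mem_ball]
    rw [mem_sphere] at hz
    rw [hz]; exact hεd
  have hsum : HasSum (fun n : ℕ => (n.factorial : ℂ)⁻¹ • (z - z₀) ^ n •
      iteratedDeriv n f z₀) (f z) :=
    Complex.hasSum_taylorSeries_on_ball (hf.mono ball_subset_closedBall) hzball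
  set a : ℕ → ℂ := fun n => (n.factorial : ℂ)⁻¹ • (z - z₀) ^ n • iteratedDeriv n f z₀
    with hadef
  have hznorm : ‖z - z₀‖ = ε := by
    rw [mem_sphere, Complex.dist_eq] at hz; exact hz
  have hanorm : ∀ n, ‖a n‖ = (n.factorial : ℝ)⁻¹ * ε ^ n * ‖iteratedDeriv n f z₀‖ := by
    intro n
    simp [hadef, norm_smul, hznorm, mul_assoc]
  have habound : ∀ n, ‖a n‖ ≤ M * r ^ n := by
    intro n
    rw [hanorm n]
    have hfact : (0:ℝ) < n.factorial := by positivity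
    calc (n.factorial : ℝ)⁻¹ * ε ^ n * ‖iteratedDeriv n f z₀‖
        ≤ (n.factorial : ℝ)⁻¹ * ε ^ n * (n.factorial * M / d ^ n) := by
          refine mul_le_mul_of_nonneg_left (hcoef n) (by positivity)
      _ = M * r ^ n := by
          rw [hrdef, div_pow]
          field_simp
  -- partial sum up to k+1 is just a k
  have hsum_head : ∑ i ∈ Finset.range (k + 1), a i = a k := by
    refine Finset.sum_eq_single_of_mem k (Finset.self_mem_range_succ k) ?_
    intro i hi hik
    have : i < k := lt_of_le_of_ne (Nat.lt_succ_iff.mp (Finset.mem_range.mp hi)) hik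
    simp [hadef, hzero i this]
  have hT : HasSum (fun n => a (n + (k + 1))) (f z - a k) := by
    refine (hasSum_nat_add_iff (k + 1)).mpr ?_
    rw [hsum_head, sub_add_cancel]
    exact hsum
  have hgeom : HasSum (fun n : ℕ => M * r ^ (k + 1) * r ^ n)
      (M * r ^ (k + 1) * (1 - r)⁻¹) :=
    (hasSum_geometric_of_lt_one hr0 hr1).mul_left _
  have hTle : ‖f z - a k‖ ≤ M * r ^ (k + 1) * (1 - r)⁻¹ := by
    rw [← hT.tsum_eq]
    refine tsum_of_norm_bounded hgeom ?_
    intro n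
    calc ‖a (n + (k + 1))‖ ≤ M * r ^ (n + (k + 1)) := habound _
      _ = M * r ^ (k + 1) * r ^ n := by ring
  have haknorm : ‖a k‖ = ‖iteratedDeriv k f z₀‖ / k.factorial * ε ^ k := by
    rw [hanorm k]; field_simp
  have h4 : ‖a k‖ - ‖f z‖ ≤ ‖f z - a k‖ := by
    rw [norm_sub_rev]
    exact norm_sub_norm_le _ _
  have : ‖a k‖ - M * r ^ (k + 1) * (1 - r)⁻¹ ≤ ‖f z‖ := by linarith
  calc ‖iteratedDeriv k f z₀‖ / (Nat.factorial k) * ε ^ k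
        - M * (ε / d) ^ (k + 1) / (1 - ε / d)
      = ‖a k‖ - M * r ^ (k + 1) * (1 - r)⁻¹ := by
        rw [haknorm, hrdef]; ring
    _ ≤ ‖f z‖ := this
    _ = ‖f z‖ := rfl
end
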